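/- arXiv:1005.1292 — 6 statements merged into one kernel-verified Lean document; each statement's English description precedes it below -/
import Mathlib

section
/- For the Broadcast Gossip Algorithm on a symmetric connected graph G, we have E[P(t)ᵀ Ω P(t)] = Ω − 2q(1−q)N⁻¹ L − q² N⁻² L², where Ω = I − N⁻¹ 1 1ᵀ. -/
open Matrix

/-- For the BGA on a symmetric connected graph `G`,
`E[P(t)ᵀ Ω P(t)] = Ω − 2q(1−q)N⁻¹ L − q² N⁻² L²`, where `Ω = I − N⁻¹ 11ᵀ`. -/
theorem bga_mean_square_symmetric {N : ℕ} (hN : 0 < N)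
    (A : Matrix (Fin N) (Fin N) ℝ)
    (hA01 : ∀ u v, A u v = 0 ∨ A u v = 1)
    (hAdiag : ∀ u, A u u = 0)
    (hAsymm : Aᵀ = A)
    (hconn : ∀ u v : Fin N, u ≠ v → Relation.TransGen (fun a b => A b a ≠ 0) u v)
    (q : ℝ) (hq : q ∈ Set.Ioo (0:ℝ) 1)
    (L : Matrix (Fin N) (Fin N) ℝ)
    (hL : L = Matrix.diagonal (fun u => ∑ v, A u v) - A)
    (P : Fin N → Matrix (Fin N) (Fin N) ℝ)
    (hP : ∀ v, P v = 1 + q • ∑ u, A u v •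
      (Matrix.single u v (1:ℝ) - Matrix.single u u 1))
    (Ω : Matrix (Fin N) (Fin N) ℝ)
    (hΩ : Ω = 1 - (N : ℝ)⁻¹ • Matrix.of (fun _ _ => (1:ℝ))) :
    (N : ℝ)⁻¹ • ∑ v, (P v)ᵀ * Ω * P v
      = Ω - (2 * q * (1 - q) / N) • L - (q ^ 2 / (N : ℝ) ^ 2) • (L * L) := by
  have hNR : (N : ℝ) ≠ 0 := Nat.cast_ne_zero.mpr hN.ne'
  set J : Matrix (Fin N) (Fin N) ℝ := Matrix.of (fun _ _ => (1:ℝ)) with hJ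
  set B : Fin N → Matrix (Fin N) (Fin N) ℝ := fun v => ∑ u, A u v •
      (Matrix.single u v (1:ℝ) - Matrix.single u u 1) with hBdef
  have hAsq : ∀ u v, A u v * A u v = A u v := by
    intro u v; rcases hA01 u v with h | h <;> simp [h]
  have hAs : ∀ u v, A u v = A v u := by
    intro u v
    conv_lhs => rw [← hAsymm]
    rfl
  have hB : ∀ v k i, B v k i = (if v = i then A k v else 0) - (if k = i then A k v else 0) := by
    intro v k i
    simp [hBdef, Matrix.sum_apply, Matrix.single, mul_sub, mul_ite, ite_and,
      Finset.sum_sub_distrib, Finset.sum_ite_eq, Finset.sum_ite_eq']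
  have hLapp : ∀ i j, L i j = (if i = j then ∑ v, A i v else 0) - A i j := by
    intro i j; simp [hL, Matrix.diagonal, Matrix.sub_apply]
  have hLs : ∀ i j, L i j = L j i := by
    intro i j
    rw [hLapp, hLapp, hAs i j]
    by_cases h : i = j
    · subst h; rfl
    · simp [h, show ¬ j = i from fun h' => h h'.symm]
  have hLT : Lᵀ = L := by
    ext i j; exact hLs j i
  have hBcol : ∀ v i, ∑ k, B v k i = L i v := by
    intro v i
    rw [hLapp]
    simp only [hB, Finset.sum_sub_distrib, Finset.sum_ite_eq', Finset.mem_univ, if_true]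
    by_cases h : v = i
    · subst h
      simp only [if_pos rfl, if_pos trivial]
      rw [Finset.sum_congr rfl fun x _ => hAs x v]
    · simp [if_neg h, show ¬ i = v from fun h' => h h'.symm, hAs i v]
  have h1 : ∑ v, B v = -L := by
    ext i j
    rw [Matrix.sum_apply, Matrix.neg_apply, hLapp]
    simp only [hB, Finset.sum_sub_distrib, Finset.sum_ite_eq', Finset.mem_univ, if_true]
    by_cases h : i = j
    · subst h; simp
    · simp [h]
  -- sum of Bᵀ B
  have h2 : ∑ v, (B v)ᵀ * (B v) = (2:ℝ) • L := by
    ext i j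
    have key : ∀ v, ((B v)ᵀ * B v) i j =
        ((if v = i then (if v = j then (∑ k, A k v) else 0) else 0)
          - (if v = i then A j v else 0))
        - ((if v = j then A i v else 0) - (if i = j then A i v else 0)) := by
      intro v
      rw [Matrix.mul_apply]
      simp only [Matrix.transpose_apply, hB]
      by_cases h1 : v = i <;> by_cases h2 : v = j <;>
        simp [h1, h2, sub_mul, mul_sub, ite_mul, mul_ite, Finset.sum_sub_distrib,
          Finset.sum_ite_eq, Finset.sum_ite_eq', hAsq] <;>
        by_cases h3 : i = j <;> simp_all [hAdiag] <;>
        exact fun h4 => absurd h4.symm h3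
    rw [Matrix.sum_apply]
    rw [Finset.sum_congr rfl fun v _ => key v]
    by_cases h : i = j
    · subst h
      simp only [if_pos rfl, Finset.sum_sub_distrib, Finset.sum_ite_eq',
        Finset.mem_univ, if_true]
      rw [Matrix.smul_apply, hLapp]
      simp only [if_pos rfl, smul_eq_mul]
      rw [Finset.sum_congr rfl fun x _ => hAs x i]
      simp only [if_true]
      ring
    · simp only [if_neg h, Finset.sum_sub_distrib, Finset.sum_ite_eq',
        Finset.mem_univ, if_true, Finset.sum_const_zero]
      rw [Matrix.smul_apply, hLapp]
      simp only [if_neg h, smul_eq_mul]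
      rw [hAs j i]
      ring
  -- sum of Bᵀ J B = L * L
  have hBJB : ∀ v, (B v)ᵀ * J * B v = Matrix.of fun i j => L i v * L j v := by
    intro v
    ext i j
    rw [Matrix.mul_apply]
    have hrow : ∀ l, ((B v)ᵀ * J) i l = L i v := by
      intro l
      rw [Matrix.mul_apply]
      simp only [Matrix.transpose_apply, hJ, Matrix.of_apply, mul_one]
      exact hBcol v i
    simp only [hrow, Matrix.of_apply]
    rw [← Finset.mul_sum, hBcol v j]
  have h3 : ∑ v, (B v)ᵀ * J * B v = L * L := by
    ext i j
    rw [Matrix.sum_apply, Matrix.mul_apply]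
    rw [Finset.sum_congr rfl fun v _ => by rw [hBJB v]]
    exact Finset.sum_congr rfl fun v _ => by rw [Matrix.of_apply, hLs j v]
  -- zero row/column sums of L
  have hrow : ∀ i, ∑ j, L i j = 0 := by
    intro i
    simp only [hLapp, Finset.sum_sub_distrib, Finset.sum_ite_eq, Finset.mem_univ, if_true]
    simp
  have hJL : J * L = 0 := by
    ext i j
    rw [Matrix.mul_apply]
    simp only [hJ, Matrix.of_apply, one_mul, Matrix.zero_apply]
    rw [Finset.sum_congr rfl fun k _ => hLs k j]
    exact hrow j
  have hLJ : L * J = 0 := by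
    ext i j
    rw [Matrix.mul_apply]
    simp only [hJ, Matrix.of_apply, mul_one, Matrix.zero_apply]
    exact hrow i
  have hΩL : Ω * L = L := by
    rw [hΩ, Matrix.sub_mul, Matrix.one_mul, Matrix.smul_mul, hJL, smul_zero, sub_zero]
  have hLΩ : L * Ω = L := by
    rw [hΩ, Matrix.mul_sub, Matrix.mul_one, Matrix.mul_smul, hLJ, smul_zero, sub_zero]
  -- expansion of each term
  have hPv : ∀ v, P v = 1 + q • B v := fun v => hP v
  have hexp : ∀ v, (P v)ᵀ * Ω * P v
      = Ω + q • ((B v)ᵀ * Ω) + q • (Ω * B v) + (q*q) • ((B v)ᵀ * Ω * B v) := by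
    intro v
    rw [hPv v]
    simp only [Matrix.transpose_add, Matrix.transpose_one, Matrix.transpose_smul]
    simp only [Matrix.add_mul, Matrix.mul_add, Matrix.smul_mul, Matrix.mul_smul,
      Matrix.one_mul, Matrix.mul_one, smul_add, smul_smul]
    abel
  have hmid : ∀ v, (B v)ᵀ * Ω * B v = (B v)ᵀ * B v - (N:ℝ)⁻¹ • ((B v)ᵀ * J * B v) := by
    intro v
    rw [hΩ, Matrix.mul_sub, Matrix.mul_one, Matrix.mul_smul, Matrix.sub_mul,
      Matrix.smul_mul]
  have hsum : ∑ v, (P v)ᵀ * Ω * P v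
      = (N:ℝ) • Ω - (2*q) • L + (q*q) • ((2:ℝ) • L - (N:ℝ)⁻¹ • (L * L)) := by
    rw [Finset.sum_congr rfl fun v _ => by rw [hexp v, hmid v]]
    simp only [Finset.sum_add_distrib, Finset.sum_sub_distrib, ← Finset.smul_sum]
    rw [show (∑ v, (B v)ᵀ * Ω) = (∑ v, B v)ᵀ * Ω by
          rw [Matrix.transpose_sum, Finset.sum_mul],
        show (∑ v, Ω * B v) = Ω * ∑ v, B v by rw [Finset.mul_sum],
        h1, h2, h3]
    rw [Matrix.transpose_neg, hLT, Matrix.neg_mul, hLΩ, Matrix.mul_neg, hΩL]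
    rw [Finset.sum_const, Finset.card_univ, Fintype.card_fin]
    rw [smul_sub]
    match_scalars <;> push_cast <;> ring
  rw [hsum]
  match_scalars <;> field_simp <;> ring
end

section
/- For the Broadcast Gossip Algorithm on the complete graph on N nodes, the rate of convergence equals (1−q)² and the bias matrix is B = (q/(2−q))·(1/N)·(I − 11ᵀ/N); in particular tr(B) = (q/(2−q))(1 − 1/N), which does not converge to 0 as N → ∞, so the algorithm is not asymptotically unbiased on complete graphs. -/
open Matrix Filter

set_option maxHeartbeats 1000000 in
/-- For the BGA on the complete graph on `N` nodes, the rate of convergence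
equals `(1−q)²`, the bias matrix is `B = (q/(2−q))·(1/N)·(I − 11ᵀ/N)`, so
`tr(B) = (q/(2−q))(1 − 1/N)`, which does not converge to `0` as `N → ∞`:
the BGA is not asymptotically unbiased on complete graphs. -/
theorem bga_complete_graph_rate_and_bias {N : ℕ} (hN : 2 ≤ N)
    (q : ℝ) (hq : q ∈ Set.Ioo (0:ℝ) 1)
    (A : Matrix (Fin N) (Fin N) ℝ)
    (hA : A = Matrix.of (fun u v => if u = v then (0:ℝ) else 1))
    (P : Fin N → Matrix (Fin N) (Fin N) ℝ)
    (hP : ∀ v, P v = 1 + q • ∑ u, A u v •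
      (Matrix.single u v (1:ℝ) - Matrix.single u u 1))
    (J : Matrix (Fin N) (Fin N) ℝ) (hJ : J = Matrix.of (fun _ _ => (1:ℝ)))
    (Ω : Matrix (Fin N) (Fin N) ℝ) (hΩ : Ω = 1 - (N : ℝ)⁻¹ • J)
    (Lop : Matrix (Fin N) (Fin N) ℝ → Matrix (Fin N) (Fin N) ℝ)
    (hLop : ∀ M, Lop M = (N : ℝ)⁻¹ • ∑ v, (P v)ᵀ * M * P v)
    (R : ℝ)
    (hR : R = ⨆ x0 : Fin N → ℝ, Filter.limsup
      (fun t : ℕ => ((N : ℝ)⁻¹ * (x0 ⬝ᵥ ((Lop^[t] Ω).mulVec x0))) ^ ((t : ℝ)⁻¹))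
      Filter.atTop)
    (B : Matrix (Fin N) (Fin N) ℝ)
    (hB : Filter.Tendsto
      (fun t : ℕ => ((N : ℝ) ^ 2)⁻¹ • Lop^[t] J - ((N : ℝ) ^ 2)⁻¹ • J)
      Filter.atTop (nhds B)) :
    R = (1 - q) ^ 2 ∧
    B = (q / (2 - q)) • ((N : ℝ)⁻¹ • (1 - (N : ℝ)⁻¹ • J)) ∧
    B.trace = (q / (2 - q)) * (1 - (N : ℝ)⁻¹) ∧
    ¬ Filter.Tendsto (fun n : ℕ => (q / (2 - q)) * (1 - (n : ℝ)⁻¹))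
        Filter.atTop (nhds 0) := by
  obtain ⟨hq0, hq1⟩ := hq
  have hNne : (N:ℝ) ≠ 0 := Nat.cast_ne_zero.mpr (by omega)
  have hN0 : (0:ℝ) < (N:ℝ) := by positivity
  have h2q : (0:ℝ) < 2 - q := by linarith
  have h2qne : (2 - q) ≠ 0 := ne_of_gt h2q
  obtain ⟨r, hrdef⟩ : ∃ r : ℝ, r = (1-q)^2 := ⟨_, rfl⟩
  have hr0 : (0:ℝ) < r := hrdef ▸ pow_pos (by linarith) 2
  have hr1 : r < 1 := by rw [hrdef]; nlinarith
  -- entrywise formula for P v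
  have hPe : ∀ v a b, P v a b = (1-q) * (if a = b then 1 else 0)
      + q * (if b = v then 1 else 0) := by
    intro v a b
    rw [hP]
    simp only [Matrix.add_apply, Matrix.smul_apply, Matrix.sum_apply, Matrix.sub_apply,
      Matrix.one_apply, hA, Matrix.of_apply, smul_eq_mul, Matrix.single]
    rw [Finset.sum_eq_single a]
    · by_cases h1 : a = v <;> by_cases h2 : a = b <;> by_cases h3 : v = b <;>
        simp_all [eq_comm] <;> ring
    · intro u _ hu
      simp [hu]
    · simp
  -- key: action of Lop on the span of 1 and J
  have key : ∀ α β : ℝ, Lop (α • 1 + β • J) = (r*α + q^2*(α+(N:ℝ)*β)) • 1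
      + (r*β + 2*q*(1-q)*(α+(N:ℝ)*β)/(N:ℝ)) • J := by
    intro α β
    rw [hLop]
    ext i j
    simp only [Matrix.smul_apply, Matrix.sum_apply, Matrix.mul_apply, Matrix.transpose_apply,
      Matrix.add_apply, Matrix.one_apply, hJ, Matrix.of_apply, hPe, smul_eq_mul, hrdef]
    simp only [mul_add, add_mul, mul_ite, ite_mul, mul_zero, zero_mul, mul_one, one_mul,
      Finset.sum_add_distrib, Finset.sum_ite_eq, Finset.sum_ite_eq', Finset.mem_univ, if_true,
      Finset.sum_const, Finset.card_univ, Fintype.card_fin, nsmul_eq_mul]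
    by_cases h : i = j <;>
      simp [h, Finset.sum_add_distrib, Finset.sum_ite_eq, Finset.sum_ite_eq', Finset.sum_const,
        Finset.card_univ, eq_comm] <;>
      field_simp <;> ring
  -- linearity of Lop
  have hLsmul : ∀ (c : ℝ) M, Lop (c • M) = c • Lop M := by
    intro c M
    simp only [hLop, Matrix.mul_smul, Matrix.smul_mul, ← Finset.smul_sum, smul_comm c]
  have hLadd : ∀ M M', Lop (M + M') = Lop M + Lop M' := by
    intro M M'
    simp only [hLop, Matrix.mul_add, Matrix.add_mul, Finset.sum_add_distrib, smul_add]
  -- Ω is an eigenvector with eigenvalue r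
  have hΩ' : Ω = (1:ℝ) • (1 : Matrix (Fin N) (Fin N) ℝ) + (-(N:ℝ)⁻¹) • J := by
    rw [hΩ]; module
  have hLΩ : Lop Ω = r • Ω := by
    rw [hΩ', key]
    rw [show (r*1 + q^2*(1+(N:ℝ)*(-(N:ℝ)⁻¹))) = r by field_simp; ring,
        show (r*(-(N:ℝ)⁻¹) + 2*q*(1-q)*(1+(N:ℝ)*(-(N:ℝ)⁻¹))/(N:ℝ)) = -(r * (N:ℝ)⁻¹) by
          field_simp; ring]
    module
  have hiterΩ : ∀ t : ℕ, Lop^[t] Ω = (r^t) • Ω := by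
    intro t
    induction t with
    | zero => simp
    | succ t ih =>
      rw [Function.iterate_succ_apply', ih, hLsmul, hLΩ, smul_smul, pow_succ]
  -- the fixed matrix F
  obtain ⟨a, hadef⟩ : ∃ a : ℝ, a = (N:ℝ)*q/(2-q) := ⟨_, rfl⟩
  obtain ⟨b, hbdef⟩ : ∃ b : ℝ, b = 2*(1-q)/(2-q) := ⟨_, rfl⟩
  obtain ⟨F, hFdef⟩ : ∃ F : Matrix (Fin N) (Fin N) ℝ, F = a • 1 + b • J := ⟨_, rfl⟩
  have hab : a + (N:ℝ)*b = (N:ℝ) := by rw [hadef, hbdef]; field_simp; ring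
  have hLF : Lop F = F := by
    rw [hFdef, key, hab]
    rw [show (r*a + q^2*(N:ℝ)) = a by rw [hrdef, hadef]; field_simp; ring,
        show (r*b + 2*q*(1-q)*(N:ℝ)/(N:ℝ)) = b by rw [hrdef, hbdef]; field_simp; ring]
  have hJdec : J = F + (-(N:ℝ)*q/(2-q)) • Ω := by
    rw [hFdef, hΩ, hJ, hadef, hbdef]
    ext i j
    simp only [Matrix.add_apply, Matrix.smul_apply, Matrix.sub_apply, Matrix.one_apply,
      Matrix.of_apply, smul_eq_mul]
    by_cases h : i = j <;> simp only [h, if_true, if_false, eq_self_iff_true] <;>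
      field_simp <;> ring
  have hiterJ : ∀ t : ℕ, Lop^[t] J = F + (r^t * (-(N:ℝ)*q/(2-q))) • Ω := by
    intro t
    induction t with
    | zero => simpa using hJdec
    | succ t ih =>
      rw [Function.iterate_succ_apply', ih, hLadd, hLF, hLsmul, hLΩ, smul_smul, pow_succ]
      ring_nf
  -- identify the limit B
  obtain ⟨Bc, hBcdef⟩ : ∃ Bc : Matrix (Fin N) (Fin N) ℝ,
      Bc = (q / (2 - q)) • ((N : ℝ)⁻¹ • (1 - (N : ℝ)⁻¹ • J)) := ⟨_, rfl⟩
  have hseq : ∀ t : ℕ, ((N : ℝ) ^ 2)⁻¹ • Lop^[t] J - ((N : ℝ) ^ 2)⁻¹ • J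
      = Bc + ((r^t * (-(N:ℝ)*q/(2-q))) * ((N:ℝ)^2)⁻¹) • Ω := by
    intro t
    rw [hiterJ t, hBcdef, hFdef, hΩ, hJ, hadef, hbdef]
    ext i j
    simp only [Matrix.add_apply, Matrix.sub_apply, Matrix.smul_apply, Matrix.one_apply,
      Matrix.of_apply, smul_eq_mul]
    by_cases h : i = j <;> simp only [h, if_true, if_false, eq_self_iff_true] <;>
      field_simp <;> ring
  have hBtend : Tendsto (fun t : ℕ => ((N : ℝ) ^ 2)⁻¹ • Lop^[t] J - ((N : ℝ) ^ 2)⁻¹ • J)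
      atTop (nhds Bc) := by
    simp only [hseq]
    have h1 : Tendsto (fun t : ℕ => r^t) atTop (nhds 0) :=
      tendsto_pow_atTop_nhds_zero_of_lt_one (le_of_lt hr0) hr1
    have h2 : Tendsto (fun t : ℕ =>
        Bc + ((r^t * (-(N:ℝ)*q/(2-q))) * ((N:ℝ)^2)⁻¹) • Ω) atTop
        (nhds (Bc + (((0:ℝ) * (-(N:ℝ)*q/(2-q))) * ((N:ℝ)^2)⁻¹) • Ω)) :=
      tendsto_const_nhds.add (((h1.mul_const _).mul_const _).smul_const Ω)
    simpa using h2
  have hBval : B = Bc := tendsto_nhds_unique hB hBtend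
  -- trace of B
  have htrJ : J.trace = (N:ℝ) := by
    rw [hJ]; simp [Matrix.trace, Matrix.diag]
  have htr : B.trace = (q / (2 - q)) * (1 - (N : ℝ)⁻¹) := by
    rw [hBval, hBcdef]
    simp only [Matrix.trace_smul, Matrix.trace_sub, Matrix.trace_one, htrJ, smul_eq_mul,
      Fintype.card_fin]
    field_simp
  -- the non-convergence claim
  have hnot : ¬ Filter.Tendsto (fun n : ℕ => (q / (2 - q)) * (1 - (n : ℝ)⁻¹))
      Filter.atTop (nhds 0) := by
    intro hcon
    have hlim : Tendsto (fun n : ℕ => (q / (2 - q)) * (1 - (n : ℝ)⁻¹)) atTop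
        (nhds (q / (2 - q) * (1 - 0))) :=
      tendsto_const_nhds.mul (tendsto_const_nhds.sub
        (tendsto_inv_atTop_zero.comp tendsto_natCast_atTop_atTop))
    have := tendsto_nhds_unique hcon hlim
    have hpos : 0 < q / (2 - q) := div_pos hq0 h2q
    rw [sub_zero, mul_one] at this
    linarith
  -- the rate computation
  have hquad : ∀ x0 : Fin N → ℝ, x0 ⬝ᵥ Ω.mulVec x0
      = (∑ i, (x0 i)^2) - (N:ℝ)⁻¹ * (∑ i, x0 i)^2 := by
    intro x0
    have hmv : ∀ i, Ω.mulVec x0 i = x0 i - (N:ℝ)⁻¹ * ∑ k, x0 k := by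
      intro i
      simp [hΩ, hJ, Matrix.mulVec, dotProduct, Matrix.sub_apply, Matrix.one_apply,
        sub_mul, Finset.sum_sub_distrib, Finset.sum_ite_eq, Finset.mul_sum]
    simp only [dotProduct, hmv, mul_sub, Finset.sum_sub_distrib]
    congr 1
    · exact Finset.sum_congr rfl (fun i _ => by ring)
    · rw [← Finset.sum_mul]; ring
  have hquad0 : ∀ x0 : Fin N → ℝ, 0 ≤ x0 ⬝ᵥ Ω.mulVec x0 := by
    intro x0
    rw [hquad]
    have h1 : (∑ i, x0 i)^2 ≤ (N:ℝ) * ∑ i, (x0 i)^2 := by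
      have := sq_sum_le_card_mul_sum_sq (s := Finset.univ) (f := x0)
      simpa using this
    have h2 : (N:ℝ)⁻¹ * (∑ i, x0 i)^2 ≤ (N:ℝ)⁻¹ * ((N:ℝ) * ∑ i, (x0 i)^2) := by
      apply mul_le_mul_of_nonneg_left h1 (by positivity)
    rw [← mul_assoc, inv_mul_cancel₀ hNne, one_mul] at h2
    linarith
  -- the value inside the limsup
  have hfun : ∀ (x0 : Fin N → ℝ) (t : ℕ),
      (N : ℝ)⁻¹ * (x0 ⬝ᵥ ((Lop^[t] Ω).mulVec x0))
        = ((N:ℝ)⁻¹ * (x0 ⬝ᵥ Ω.mulVec x0)) * r^t := by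
    intro x0 t
    rw [hiterΩ, Matrix.smul_mulVec, dotProduct_smul, smul_eq_mul]
    ring
  have hglimsup : ∀ x0 : Fin N → ℝ,
      Filter.limsup (fun t : ℕ =>
        ((N : ℝ)⁻¹ * (x0 ⬝ᵥ ((Lop^[t] Ω).mulVec x0))) ^ ((t : ℝ)⁻¹)) Filter.atTop
      = (if (N:ℝ)⁻¹ * (x0 ⬝ᵥ Ω.mulVec x0) = 0 then 0 else r) := by
    intro x0
    set e : ℝ := (N:ℝ)⁻¹ * (x0 ⬝ᵥ Ω.mulVec x0) with hedef
    have he0 : 0 ≤ e := mul_nonneg (by positivity) (hquad0 x0)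
    by_cases he : e = 0
    · rw [if_pos he]
      have hev : ∀ᶠ t : ℕ in atTop, ((N : ℝ)⁻¹ *
          (x0 ⬝ᵥ ((Lop^[t] Ω).mulVec x0))) ^ ((t : ℝ)⁻¹) = 0 := by
        filter_upwards [eventually_ge_atTop 1] with t ht
        rw [hfun, ← hedef, he, zero_mul]
        exact Real.zero_rpow (by positivity)
      rw [Filter.limsup_congr hev]
      simp [Filter.limsup_const]
    · rw [if_neg he]
      have hepos : 0 < e := lt_of_le_of_ne he0 (Ne.symm he)
      have htend : Tendsto (fun t : ℕ =>
          ((N : ℝ)⁻¹ * (x0 ⬝ᵥ ((Lop^[t] Ω).mulVec x0))) ^ ((t : ℝ)⁻¹)) atTop (nhds r) := by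
        have hinv : Tendsto (fun t : ℕ => (t:ℝ)⁻¹) atTop (nhds 0) :=
          tendsto_inv_atTop_zero.comp tendsto_natCast_atTop_atTop
        have hexp : Tendsto (fun t : ℕ => Real.exp (Real.log e * (t:ℝ)⁻¹) * r) atTop
            (nhds (Real.exp (Real.log e * 0) * r)) :=
          ((Real.continuous_exp.tendsto _).comp (tendsto_const_nhds.mul hinv)).mul_const r
        rw [mul_zero, Real.exp_zero, one_mul] at hexp
        apply hexp.congr'
        filter_upwards [eventually_ge_atTop 1] with t ht
        have htne : (t:ℝ) ≠ 0 := Nat.cast_ne_zero.mpr (by omega)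
        rw [hfun, ← hedef, Real.mul_rpow (le_of_lt hepos) (by positivity),
          ← Real.rpow_natCast r t, ← Real.rpow_mul (le_of_lt hr0),
          mul_inv_cancel₀ htne, Real.rpow_one, ← Real.rpow_def_of_pos hepos]
      exact htend.limsup_eq
  have hRval : R = r := by
    rw [hR]
    have hub : ∀ x0 : Fin N → ℝ, Filter.limsup (fun t : ℕ =>
        ((N : ℝ)⁻¹ * (x0 ⬝ᵥ ((Lop^[t] Ω).mulVec x0))) ^ ((t : ℝ)⁻¹)) Filter.atTop ≤ r := by
      intro x0
      rw [hglimsup x0]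
      split <;> [exact le_of_lt hr0; exact le_refl r]
    apply le_antisymm
    · exact ciSup_le hub
    · -- witness
      haveI : NeZero N := ⟨by omega⟩
      set x1 : Fin N → ℝ := Pi.single (0 : Fin N) 1 with hx1def
      have hx1 : (N:ℝ)⁻¹ * (x1 ⬝ᵥ Ω.mulVec x1) ≠ 0 := by
        have hsum : (∑ i, x1 i) = 1 := by simp [hx1def]
        have hsq : (∑ i, (x1 i)^2) = 1 := by
          rw [hx1def]
          rw [Finset.sum_eq_single (0 : Fin N)]
          · simp
          · intro u _ hu; simp [Pi.single_apply, hu]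
          · simp
        have : x1 ⬝ᵥ Ω.mulVec x1 = 1 - (N:ℝ)⁻¹ := by
          rw [hquad, hsum, hsq]; ring
        rw [this]
        have h1N : (N:ℝ)⁻¹ < 1 := by
          rw [inv_lt_one_iff₀]
          right
          exact_mod_cast by omega
        have := sub_pos.mpr h1N
        positivity
      have hbdd : BddAbove (Set.range (fun x0 : Fin N → ℝ => Filter.limsup (fun t : ℕ =>
          ((N : ℝ)⁻¹ * (x0 ⬝ᵥ ((Lop^[t] Ω).mulVec x0))) ^ ((t : ℝ)⁻¹)) Filter.atTop)) := by
        refine ⟨r, ?_⟩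
        rintro _ ⟨x0, rfl⟩
        exact hub x0
      have := le_ciSup hbdd x1
      rw [hglimsup x1, if_neg hx1] at this
      exact this
  exact ⟨hrdef ▸ hRval, hBcdef ▸ hBval, htr, hnot⟩
end

section
/- On the complete graph on N nodes, the Collision Broadcast Gossip Algorithm has rate of convergence R = 1 − q(2−q)·N p(1−p)^{N−1} and bias matrix B = (q/(2−q))·(1/N)·(I − 11ᵀ/N). -/
open Matrix Filter

lemma cbga_Pbe {N : ℕ} (q : ℝ) (Pb : Fin N → Matrix (Fin N) (Fin N) ℝ)
    (hPb : ∀ v, Pb v = 1 + q • ∑ u, (if u = v then (0:ℝ) else 1) •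
      (Matrix.single u v (1:ℝ) - Matrix.single u u 1)) :
    ∀ v i j, Pb v i j = (if i = j then 1-q else 0) + (if j = v then q else 0) := by
  intro v i j
  rw [hPb]
  simp only [Matrix.add_apply, Matrix.smul_apply, Matrix.sum_apply, Matrix.sub_apply,
    Matrix.one_apply, Matrix.single, Matrix.of_apply, smul_eq_mul]
  rw [Finset.sum_eq_single i]
  · by_cases hiv : i = v <;> by_cases hij : i = j <;> by_cases hjv : j = v <;>
      subst_vars <;> simp_all [eq_comm] <;> ring
  · intro b _ hbi
    by_cases hbv : b = v <;> simp [hbv, hbi, Ne.symm hbi]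
  · simp

lemma cbga_inner {N : ℕ} (q : ℝ) (Pb : Fin N → Matrix (Fin N) (Fin N) ℝ)
    (hPbe : ∀ v i j, Pb v i j = (if i = j then 1-q else 0) + (if j = v then q else 0)) :
    ∀ (v i j : Fin N), ∑ k, Pb v k i * Pb v k j =
      (if i = j then (1-q)^2 else 0) + (if j = v then (1-q)*q else 0)
      + (if i = v then q*(1-q) else 0)
      + (if i = v then 1 else 0) * (if j = v then 1 else 0) * N * q^2 := by
  intro v i j
  simp only [hPbe]
  simp [add_mul, mul_add, Finset.sum_add_distrib, mul_ite, ite_mul, mul_zero, zero_mul,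
    Finset.sum_ite_eq', Finset.sum_const, Finset.card_univ, Fintype.card_fin]
  by_cases hij : i = j <;> by_cases hiv : i = v <;> by_cases hjv : j = v <;>
    subst_vars <;> simp_all [eq_comm] <;> ring

lemma cbga_colsum {N : ℕ} (q : ℝ) (Pb : Fin N → Matrix (Fin N) (Fin N) ℝ)
    (hPbe : ∀ v i j, Pb v i j = (if i = j then 1-q else 0) + (if j = v then q else 0)) :
    ∀ (v j : Fin N), ∑ k, Pb v k j = (1-q) + (if j = v then (N:ℝ)*q else 0) := by
  intro v j
  simp only [hPbe]
  simp [Finset.sum_add_distrib, Finset.sum_ite_eq', Finset.sum_const, Finset.card_univ,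
    Fintype.card_fin, mul_comm]

lemma cbga_sum1 {N : ℕ} (q : ℝ) (Pb : Fin N → Matrix (Fin N) (Fin N) ℝ)
    (hPbe : ∀ v i j, Pb v i j = (if i = j then 1-q else 0) + (if j = v then q else 0))
    (J : Matrix (Fin N) (Fin N) ℝ) (hJ : J = Matrix.of (fun _ _ => (1:ℝ))) :
    ∑ v, (Pb v)ᵀ * Pb v = ((N:ℝ)*((1-q)^2+q^2)) • 1 + (2*q*(1-q)) • J := by
  ext i j
  simp only [Matrix.sum_apply, Matrix.mul_apply, Matrix.transpose_apply]
  rw [Finset.sum_congr rfl (fun v _ => cbga_inner q Pb hPbe v i j)]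
  simp [hJ, Finset.sum_add_distrib, Finset.sum_ite_eq', ite_mul, zero_mul,
    Finset.sum_const, Finset.card_univ, Fintype.card_fin, Matrix.one_apply, mul_ite, mul_zero]
  by_cases hij : i = j <;> subst_vars <;> simp_all <;> ring

lemma cbga_sum2 {N : ℕ} (q : ℝ) (Pb : Fin N → Matrix (Fin N) (Fin N) ℝ)
    (hPbe : ∀ v i j, Pb v i j = (if i = j then 1-q else 0) + (if j = v then q else 0))
    (J : Matrix (Fin N) (Fin N) ℝ) (hJ : J = Matrix.of (fun _ _ => (1:ℝ))) :
    ∑ v, (Pb v)ᵀ * J * Pb v = ((N:ℝ)*(1-q^2)) • J + (q^2*(N:ℝ)^2) • 1 := by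
  have key : ∀ (v i j : Fin N), ((Pb v)ᵀ * J * Pb v) i j
      = ((1-q) + (if i = v then (N:ℝ)*q else 0)) * ((1-q) + (if j = v then (N:ℝ)*q else 0)) := by
    intro v i j
    simp only [Matrix.mul_apply, Matrix.transpose_apply, hJ, Matrix.of_apply, mul_one]
    rw [← Finset.mul_sum, cbga_colsum q Pb hPbe, cbga_colsum q Pb hPbe]
  ext i j
  simp only [Matrix.sum_apply]
  rw [Finset.sum_congr rfl (fun v _ => key v i j)]
  simp [hJ, add_mul, mul_add, Finset.sum_add_distrib, Finset.sum_ite_eq', ite_mul, mul_ite,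
    zero_mul, mul_zero, Finset.sum_const, Finset.card_univ, Fintype.card_fin, Matrix.one_apply]
  by_cases hij : i = j <;> subst_vars <;> simp_all [eq_comm] <;> ring

lemma cbga_LopAB {N : ℕ} (p q : ℝ)
    (Pb : Fin N → Matrix (Fin N) (Fin N) ℝ)
    (hPbe : ∀ v i j, Pb v i j = (if i = j then 1-q else 0) + (if j = v then q else 0))
    (J : Matrix (Fin N) (Fin N) ℝ) (hJ : J = Matrix.of (fun _ _ => (1:ℝ)))
    (Lop : Matrix (Fin N) (Fin N) ℝ → Matrix (Fin N) (Fin N) ℝ)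
    (hLop : ∀ M, Lop M = (1 - N * p * (1 - p) ^ (N - 1)) • M
      + (p * (1 - p) ^ (N - 1)) • ∑ v, (Pb v)ᵀ * M * Pb v)
    (a b : ℝ) :
    Lop (a • 1 + b • J) =
      (a*(1-2*q*(1-q)*((N:ℝ)*(p * (1 - p) ^ (N - 1))))
        + b*(q^2*(N:ℝ)^2*(p * (1 - p) ^ (N - 1)))) • (1 : Matrix (Fin N) (Fin N) ℝ)
      + (b*(1-q^2*((N:ℝ)*(p * (1 - p) ^ (N - 1))))
        + 2*q*(1-q)*(p * (1 - p) ^ (N - 1))*a) • J := by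
  rw [hLop]
  rw [show ∑ v, (Pb v)ᵀ * (a • 1 + b • J) * Pb v
      = a • (∑ v, (Pb v)ᵀ * Pb v) + b • (∑ v, (Pb v)ᵀ * J * Pb v) by
    rw [Finset.smul_sum, Finset.smul_sum, ← Finset.sum_add_distrib]
    refine Finset.sum_congr rfl fun v _ => ?_
    rw [Matrix.mul_add, Matrix.add_mul, Matrix.mul_smul, Matrix.mul_smul,
      Matrix.smul_mul, Matrix.smul_mul, Matrix.mul_one]]
  rw [cbga_sum1 q Pb hPbe J hJ, cbga_sum2 q Pb hPbe J hJ]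
  match_scalars <;> ring

lemma cbga_limsup_le (μ c : ℝ) (hμ0 : 0 < μ) (hμ1 : μ < 1) (hc : 0 ≤ c) :
    Filter.limsup (fun t : ℕ => (μ^t * c) ^ ((t:ℝ)⁻¹)) Filter.atTop ≤ μ ∧
    (0 < c → Filter.limsup (fun t : ℕ => (μ^t * c) ^ ((t:ℝ)⁻¹)) Filter.atTop = μ) := by
  rcases eq_or_lt_of_le hc with hc0 | hcpos
  · have htend : Tendsto (fun t:ℕ => (μ^t * c)^((t:ℝ)⁻¹)) atTop (nhds 0) := by
      apply Tendsto.congr' ?_ tendsto_const_nhds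
      filter_upwards [eventually_ge_atTop 1] with t ht
      have htne : ((t:ℝ))⁻¹ ≠ 0 := by
        simp only [ne_eq, inv_eq_zero, Nat.cast_eq_zero]; omega
      rw [← hc0, mul_zero, Real.zero_rpow htne]
    refine ⟨by rw [htend.limsup_eq]; linarith, fun h => absurd hc0 (by linarith)⟩
  · have h1 : ∀ᶠ t : ℕ in atTop, μ * c^((t:ℝ)⁻¹) = (μ^t * c)^((t:ℝ)⁻¹) := by
      filter_upwards [eventually_ge_atTop 1] with t ht
      have htne : (t:ℝ) ≠ 0 := Nat.cast_ne_zero.mpr (by omega)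
      rw [Real.mul_rpow (by positivity) hc]
      congr 1
      rw [← Real.rpow_natCast μ t, ← Real.rpow_mul (le_of_lt hμ0), mul_inv_cancel₀ htne,
        Real.rpow_one]
    have hinv : Tendsto (fun t:ℕ => (t:ℝ)⁻¹) atTop (nhds 0) :=
      tendsto_inv_atTop_zero.comp tendsto_natCast_atTop_atTop
    have h2 : Tendsto (fun t:ℕ => c^((t:ℝ)⁻¹)) atTop (nhds 1) := by
      have hcont : ContinuousAt (fun x : ℝ => c ^ x) 0 :=
        Real.continuousAt_const_rpow (ne_of_gt hcpos)
      have := hcont.tendsto.comp hinv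
      simpa [Real.rpow_zero, Function.comp_def] using this
    have htend : Tendsto (fun t:ℕ => (μ^t * c)^((t:ℝ)⁻¹)) atTop (nhds μ) := by
      refine Tendsto.congr' h1 ?_
      simpa using tendsto_const_nhds.mul h2
    exact ⟨le_of_eq htend.limsup_eq, fun _ => htend.limsup_eq⟩

/-- On the complete graph on `N` nodes, the Collision Broadcast Gossip
Algorithm (each node activates independently with probability `p`; a broadcast succeeds
iff exactly one node is active, which happens with probability `N p (1−p)^{N−1}`) has
rate of convergence `R = 1 − q(2−q)·N p(1−p)^{N−1}` and bias matrix
`B = (q/(2−q))·(1/N)·(I − 11ᵀ/N)`. -/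
theorem cbga_complete_graph_rate_and_bias {N : ℕ} (hN : 2 ≤ N)
    (p q : ℝ) (hp : p ∈ Set.Ioo (0:ℝ) 1) (hq : q ∈ Set.Ioo (0:ℝ) 1)
    (Pb : Fin N → Matrix (Fin N) (Fin N) ℝ)
    (hPb : ∀ v, Pb v = 1 + q • ∑ u, (if u = v then (0:ℝ) else 1) •
      (Matrix.single u v (1:ℝ) - Matrix.single u u 1))
    (J : Matrix (Fin N) (Fin N) ℝ) (hJ : J = Matrix.of (fun _ _ => (1:ℝ)))
    (Ω : Matrix (Fin N) (Fin N) ℝ) (hΩ : Ω = 1 - (N : ℝ)⁻¹ • J)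
    (Lop : Matrix (Fin N) (Fin N) ℝ → Matrix (Fin N) (Fin N) ℝ)
    (hLop : ∀ M, Lop M = (1 - N * p * (1 - p) ^ (N - 1)) • M
      + (p * (1 - p) ^ (N - 1)) • ∑ v, (Pb v)ᵀ * M * Pb v)
    (R : ℝ)
    (hR : R = ⨆ x0 : Fin N → ℝ, Filter.limsup
      (fun t : ℕ => ((N : ℝ)⁻¹ * (x0 ⬝ᵥ ((Lop^[t] Ω).mulVec x0))) ^ ((t : ℝ)⁻¹))
      Filter.atTop)
    (B : Matrix (Fin N) (Fin N) ℝ)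
    (hB : Filter.Tendsto
      (fun t : ℕ => ((N : ℝ) ^ 2)⁻¹ • Lop^[t] J - ((N : ℝ) ^ 2)⁻¹ • J)
      Filter.atTop (nhds B)) :
    R = 1 - q * (2 - q) * (N * p * (1 - p) ^ (N - 1)) ∧
    B = (q / (2 - q)) • ((N : ℝ)⁻¹ • (1 - (N : ℝ)⁻¹ • J)) := by
  obtain ⟨hp0, hp1⟩ := hp
  obtain ⟨hq0, hq1⟩ := hq
  have hN0 : (0:ℝ) < N := by exact_mod_cast Nat.lt_of_lt_of_le (by norm_num) hN
  have hNne : (N:ℝ) ≠ 0 := ne_of_gt hN0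
  have hPbe := cbga_Pbe q Pb hPb
  have hAB := cbga_LopAB p q Pb hPbe J hJ Lop hLop
  have h2q : (0:ℝ) < 2 - q := by linarith
  have h2qne : (2:ℝ) - q ≠ 0 := ne_of_gt h2q
  -- notation
  set r : ℝ := p * (1 - p) ^ (N - 1) with hrdef
  have hrpos : 0 < r := by
    have h1p : (0:ℝ) < 1 - p := by linarith
    positivity
  -- N r ≤ 1 via binomial theorem
  have hNr1 : (N:ℝ) * r ≤ 1 := by
    have hbin := add_pow p (1-p) N
    rw [show p + (1-p) = 1 by ring, one_pow] at hbin
    have hmem : 1 ∈ Finset.range (N+1) := by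
      simp; omega
    have hsingle := Finset.single_le_sum
      (f := fun k => p^k * (1-p)^(N-k) * (N.choose k : ℝ))
      (fun k _ => by
        have h1p : (0:ℝ) ≤ 1 - p := by linarith
        positivity) hmem
    rw [← hbin] at hsingle
    simpa [hrdef, mul_comm, mul_assoc, mul_left_comm] using hsingle
  set μ : ℝ := 1 - q*(2-q)*((N:ℝ)*r) with hμdef
  have hq2 : 0 < q*(2-q) := by nlinarith
  have hq2' : q*(2-q) < 1 := by nlinarith
  have hNrpos : 0 < (N:ℝ)*r := by positivity
  have hμ0 : 0 < μ := by
    have : q*(2-q)*((N:ℝ)*r) ≤ q*(2-q) := by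
      nlinarith
    rw [hμdef]; nlinarith
  have hμ1 : μ < 1 := by
    rw [hμdef]; nlinarith
  -- Lop is homogeneous
  have hLsmul : ∀ (c:ℝ) (M : Matrix (Fin N) (Fin N) ℝ), Lop (c • M) = c • Lop M := by
    intro c M
    simp only [hLop, Matrix.mul_smul, Matrix.smul_mul, ← Finset.smul_sum]
    module
  -- action on Ω
  have hΩ' : Ω = (1:ℝ) • 1 + (-(N:ℝ)⁻¹) • J := by rw [hΩ]; module
  have hLopΩ : Lop Ω = μ • Ω := by
    rw [hΩ', hAB 1 (-(N:ℝ)⁻¹), hμdef]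
    match_scalars <;> field_simp <;> ring
  have hΩt : ∀ t : ℕ, Lop^[t] Ω = μ^t • Ω := by
    intro t
    induction t with
    | zero => simp
    | succ t ih =>
      rw [Function.iterate_succ_apply', ih, hLsmul, hLopΩ, smul_smul, ← pow_succ]
  -- closed form for iterates on J
  have hJt : ∀ t : ℕ, Lop^[t] J = ((q*(N:ℝ)/(2-q))*(1-μ^t)) • (1 : Matrix (Fin N) (Fin N) ℝ)
      + (1 - (q/(2-q))*(1-μ^t)) • J := by
    intro t
    induction t with
    | zero => simp
    | succ t ih =>
      rw [Function.iterate_succ_apply', ih]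
      rw [show Lop (((q*(N:ℝ)/(2-q))*(1-μ^t)) • (1 : Matrix (Fin N) (Fin N) ℝ)
          + (1 - (q/(2-q))*(1-μ^t)) • J)
        = _ from hAB ((q*(N:ℝ)/(2-q))*(1-μ^t)) (1 - (q/(2-q))*(1-μ^t))]
      rw [hμdef]
      match_scalars <;> field_simp <;> ring
  ------------------------------------------------------------------
  -- Part 2 : bias matrix
  ------------------------------------------------------------------
  have hμt : Filter.Tendsto (fun t:ℕ => μ^t) Filter.atTop (nhds 0) :=
    tendsto_pow_atTop_nhds_zero_of_lt_one (le_of_lt hμ0) hμ1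
  have heq : ∀ t:ℕ, ((N:ℝ)^2)⁻¹ • Lop^[t] J - ((N:ℝ)^2)⁻¹ • J
      = (((N:ℝ)^2)⁻¹ * ((q*(N:ℝ)/(2-q))*(1-μ^t))) • (1 : Matrix (Fin N) (Fin N) ℝ)
        + (((N:ℝ)^2)⁻¹ * (- (q/(2-q))*(1-μ^t))) • J := by
    intro t
    rw [hJt t]
    match_scalars <;> ring
  have h1lim : Filter.Tendsto (fun t:ℕ => (((N:ℝ)^2)⁻¹ * ((q*(N:ℝ)/(2-q))*(1-μ^t))))
      Filter.atTop (nhds (((N:ℝ)^2)⁻¹ * ((q*(N:ℝ)/(2-q))*(1-0)))) :=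
    (tendsto_const_nhds.sub hμt).const_mul _ |>.const_mul _
  have h2lim : Filter.Tendsto (fun t:ℕ => (((N:ℝ)^2)⁻¹ * (- (q/(2-q))*(1-μ^t))))
      Filter.atTop (nhds (((N:ℝ)^2)⁻¹ * (- (q/(2-q))*(1-0)))) :=
    (tendsto_const_nhds.sub hμt).const_mul _ |>.const_mul _
  have hBval : Filter.Tendsto
      (fun t : ℕ => ((N : ℝ) ^ 2)⁻¹ • Lop^[t] J - ((N : ℝ) ^ 2)⁻¹ • J)
      Filter.atTop (nhds ((q / (2 - q)) • ((N : ℝ)⁻¹ • (1 - (N : ℝ)⁻¹ • J)))) := by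
    have hlim := (h1lim.smul_const (1 : Matrix (Fin N) (Fin N) ℝ)).add (h2lim.smul_const J)
    have hpt : (((N:ℝ)^2)⁻¹ * ((q*(N:ℝ)/(2-q))*(1-0))) • (1 : Matrix (Fin N) (Fin N) ℝ)
        + (((N:ℝ)^2)⁻¹ * (- (q/(2-q))*(1-0))) • J
        = (q / (2 - q)) • ((N : ℝ)⁻¹ • (1 - (N : ℝ)⁻¹ • J)) := by
      match_scalars
      all_goals field_simp
      all_goals try ring
      all_goals tauto
    rw [← hpt]
    exact Filter.Tendsto.congr (fun t => (heq t).symm) hlim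
  have hBeq : B = (q / (2 - q)) • ((N : ℝ)⁻¹ • (1 - (N : ℝ)⁻¹ • J)) :=
    tendsto_nhds_unique hB hBval
  ------------------------------------------------------------------
  -- Part 1 : rate of convergence
  ------------------------------------------------------------------
  -- quadratic form nonneg
  have hquadeq : ∀ x0 : Fin N → ℝ, x0 ⬝ᵥ Ω.mulVec x0
      = (∑ i, x0 i * x0 i) - (N:ℝ)⁻¹ * (∑ i, x0 i)^2 := by
    intro x0
    have hJd : x0 ⬝ᵥ (J.mulVec x0) = (∑ i, x0 i)^2 := by
      simp only [hJ, Matrix.mulVec, dotProduct, Matrix.of_apply, one_mul]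
      rw [sq, Finset.sum_mul]
    rw [hΩ, Matrix.sub_mulVec, Matrix.one_mulVec, dotProduct_sub, Matrix.smul_mulVec,
      dotProduct_smul, smul_eq_mul, hJd]
    simp [dotProduct]
  have hquad : ∀ x0 : Fin N → ℝ, 0 ≤ x0 ⬝ᵥ Ω.mulVec x0 := by
    intro x0
    rw [hquadeq x0]
    have hchev : (∑ i, x0 i)^2 ≤ (N:ℝ) * ∑ i, x0 i ^ 2 := by
      simpa using sq_sum_le_card_mul_sum_sq (s := (Finset.univ : Finset (Fin N))) (f := x0)
    have hNi : (N:ℝ)⁻¹ * (N:ℝ) = 1 := inv_mul_cancel₀ hNne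
    have hNipos : (0:ℝ) < (N:ℝ)⁻¹ := by positivity
    have h1 : (N:ℝ)⁻¹ * (∑ i, x0 i)^2 ≤ (N:ℝ)⁻¹ * ((N:ℝ) * ∑ i, x0 i ^ 2) :=
      mul_le_mul_of_nonneg_left hchev (le_of_lt hNipos)
    rw [← mul_assoc, hNi, one_mul] at h1
    have : ∑ i, x0 i ^ 2 = ∑ i, x0 i * x0 i := by simp [sq]
    linarith [h1, this ▸ h1]
  -- rewrite the sequence
  have hfun : ∀ x0 : Fin N → ℝ,
      (fun t : ℕ => ((N : ℝ)⁻¹ * (x0 ⬝ᵥ ((Lop^[t] Ω).mulVec x0))) ^ ((t : ℝ)⁻¹))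
      = fun t : ℕ => (μ^t * ((N:ℝ)⁻¹ * (x0 ⬝ᵥ Ω.mulVec x0))) ^ ((t:ℝ)⁻¹) := by
    intro x0
    funext t
    congr 1
    rw [hΩt t, Matrix.smul_mulVec, dotProduct_smul, smul_eq_mul]
    ring
  have hc0 : ∀ x0 : Fin N → ℝ, 0 ≤ (N:ℝ)⁻¹ * (x0 ⬝ᵥ Ω.mulVec x0) := by
    intro x0
    have := hquad x0
    positivity
  have hle : ∀ x0 : Fin N → ℝ, Filter.limsup
      (fun t : ℕ => ((N : ℝ)⁻¹ * (x0 ⬝ᵥ ((Lop^[t] Ω).mulVec x0))) ^ ((t : ℝ)⁻¹))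
      Filter.atTop ≤ μ := by
    intro x0
    rw [hfun x0]
    exact (cbga_limsup_le μ _ hμ0 hμ1 (hc0 x0)).1
  -- the witness
  have i0 : Fin N := ⟨0, by omega⟩
  set x1 : Fin N → ℝ := Pi.single i0 1 with hx1
  have hx1quad : x1 ⬝ᵥ Ω.mulVec x1 = 1 - (N:ℝ)⁻¹ := by
    rw [hquadeq x1]
    simp [hx1, Pi.single_apply, Finset.sum_ite_eq']
  have hx1pos : 0 < (N:ℝ)⁻¹ * (x1 ⬝ᵥ Ω.mulVec x1) := by
    rw [hx1quad]
    have h2 : (N:ℝ)⁻¹ ≤ 2⁻¹ := by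
      apply inv_anti₀ (by norm_num)
      exact_mod_cast hN
    have : (0:ℝ) < (N:ℝ)⁻¹ := by positivity
    nlinarith
  have hwit : Filter.limsup
      (fun t : ℕ => ((N : ℝ)⁻¹ * (x1 ⬝ᵥ ((Lop^[t] Ω).mulVec x1))) ^ ((t : ℝ)⁻¹))
      Filter.atTop = μ := by
    rw [hfun x1]
    exact (cbga_limsup_le μ _ hμ0 hμ1 (hc0 x1)).2 hx1pos
  have hbdd : BddAbove (Set.range (fun x0 : Fin N → ℝ => Filter.limsup
      (fun t : ℕ => ((N : ℝ)⁻¹ * (x0 ⬝ᵥ ((Lop^[t] Ω).mulVec x0))) ^ ((t : ℝ)⁻¹))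
      Filter.atTop)) := by
    refine ⟨μ, ?_⟩
    rintro _ ⟨x0, rfl⟩
    exact hle x0
  have hRμ : R = μ := by
    rw [hR]
    refine le_antisymm (ciSup_le hle) ?_
    calc μ = _ := hwit.symm
    _ ≤ _ := le_ciSup hbdd x1
  constructor
  · rw [hRμ, hμdef, hrdef]; ring
  · exact hBeq
end

section
/- If G is a d-regular connected graph with Laplacian L having smallest positive eigenvalue λ₁, then the rate of convergence R of the CBGA satisfies R ≥ 1 − 2qp(1−p)^d λ₁; moreover the function p ↦ p(1−p)^d is maximized on (0,1) at p* = 1/(d+1). -/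
open Matrix Finset Filter

private lemma sum_pow_weights {α : Type*} [DecidableEq α] (p : ℝ) (U : Finset α) :
    ∑ B ∈ U.powerset, p ^ B.card * (1 - p) ^ (U.card - B.card) = 1 := by
  have h := Finset.prod_add (fun _ : α => p) (fun _ : α => (1 : ℝ) - p) U
  simp only [add_sub_cancel, Finset.prod_const] at h
  rw [one_pow] at h
  refine Eq.trans ?_ h.symm
  exact Finset.sum_congr rfl fun B hB => by
    rw [Finset.card_sdiff_of_subset (Finset.mem_powerset.mp hB)]

private lemma jensen_sq {ι : Type*} (s : Finset ι) (w z : ι → ℝ) (hw : ∀ i ∈ s, 0 ≤ w i)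
    (hw1 : ∑ i ∈ s, w i = 1) : (∑ i ∈ s, w i * z i) ^ 2 ≤ ∑ i ∈ s, w i * z i ^ 2 := by
  have h := Finset.sum_mul_sq_le_sq_mul_sq s (fun i => Real.sqrt (w i))
      (fun i => Real.sqrt (w i) * z i)
  have e1 : ∀ i ∈ s, Real.sqrt (w i) * (Real.sqrt (w i) * z i) = w i * z i := by
    intro i hi; rw [← mul_assoc, Real.mul_self_sqrt (hw i hi)]
  have e2 : ∀ i ∈ s, Real.sqrt (w i) ^ 2 = w i := fun i hi => Real.sq_sqrt (hw i hi)
  have e3 : ∀ i ∈ s, (Real.sqrt (w i) * z i) ^ 2 = w i * z i ^ 2 := by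
    intro i hi; rw [mul_pow, Real.sq_sqrt (hw i hi)]
  rw [Finset.sum_congr rfl e1, Finset.sum_congr rfl e2, Finset.sum_congr rfl e3, hw1, one_mul] at h
  exact h

private lemma sum_mulVec' {n : Type*} [Fintype n] {ι : Type*} (s : Finset ι)
    (M : ι → Matrix n n ℝ) (v : n → ℝ) :
    (∑ i ∈ s, M i).mulVec v = ∑ i ∈ s, (M i).mulVec v := by
  ext u
  simp only [Matrix.mulVec, dotProduct, Matrix.sum_apply, Finset.sum_apply,
    Finset.sum_mul]
  exact Finset.sum_comm

private lemma dotProduct_sum' {n : Type*} [Fintype n] {ι : Type*} (s : Finset ι)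
    (v : n → ℝ) (f : ι → n → ℝ) :
    v ⬝ᵥ (∑ i ∈ s, f i) = ∑ i ∈ s, v ⬝ᵥ f i := by
  simp only [dotProduct, Finset.sum_apply, Finset.mul_sum]
  exact Finset.sum_comm

private lemma expectAsucc {N : ℕ} (A : Matrix (Fin N) (Fin N) ℝ)
    (hA01 : ∀ u v, A u v = 0 ∨ A u v = 1)
    (hAdiag : ∀ u, A u u = 0)
    (d : ℕ) (hreg : ∀ u, (Finset.univ.filter fun v => A u v ≠ 0).card = d)
    (p : ℝ)
    (w : Finset (Fin N) → ℝ)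
    (hw : ∀ S, w S = p ^ S.card * (1 - p) ^ (N - S.card))
    (Asucc : Finset (Fin N) → Matrix (Fin N) (Fin N) ℝ)
    (hAsucc : ∀ S, Asucc S = Matrix.of (fun u v =>
      if v ∈ S ∧ u ∉ S ∧ (Finset.univ.filter fun m => A u m ≠ 0 ∧ m ∈ S) = {v}
      then A u v else 0))
    (u v : Fin N) :
    ∑ S : Finset (Fin N), w S * Asucc S u v = (p * (1 - p) ^ d) * A u v := by
  classical
  rcases hA01 u v with h0 | h1
  · rw [h0, mul_zero]
    refine Finset.sum_eq_zero fun S _ => ?_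
    rw [hAsucc S]
    simp only [Matrix.of_apply]
    split <;> simp [h0]
  · set Nu : Finset (Fin N) := Finset.univ.filter fun m => A u m ≠ 0 with hNu
    have hvNu : v ∈ Nu := by simp [hNu, h1]
    have huNu : u ∉ Nu := by simp [hNu, hAdiag u]
    set T : Finset (Fin N) := insert u Nu with hT
    have hcardT : T.card = d + 1 := by
      rw [hT, Finset.card_insert_of_notMem huNu, hreg u]
    have hvT : v ∈ T := Finset.mem_insert_of_mem hvNu
    have huv : u ≠ v := by
      intro h; rw [← h, hAdiag] at h1; exact zero_ne_one h1
    have hcond : ∀ S : Finset (Fin N),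
        (v ∈ S ∧ u ∉ S ∧ (Finset.univ.filter fun m => A u m ≠ 0 ∧ m ∈ S) = {v})
        ↔ S ∩ T = {v} := by
      intro S
      have hfil : (Finset.univ.filter fun m => A u m ≠ 0 ∧ m ∈ S) = Nu ∩ S := by
        ext m; simp [hNu, and_comm]
      constructor
      · rintro ⟨hvS, huS, hfeq⟩
        rw [hfil] at hfeq
        ext x
        simp only [Finset.mem_inter, Finset.mem_singleton, hT, Finset.mem_insert]
        constructor
        · rintro ⟨hxS, hx | hxNu⟩
          · exact absurd (hx ▸ hxS) huS
          · have : x ∈ Nu ∩ S := Finset.mem_inter.mpr ⟨hxNu, hxS⟩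
            rw [hfeq] at this; exact Finset.mem_singleton.mp this
        · intro hx; exact ⟨by rw [hx]; exact hvS, by rw [hx]; exact Or.inr hvNu⟩
      · intro hST
        have hvS : v ∈ S := by
          have : v ∈ S ∩ T := hST ▸ Finset.mem_singleton_self v
          exact (Finset.mem_inter.mp this).1
        have huS : u ∉ S := by
          intro huS
          have : u ∈ S ∩ T := Finset.mem_inter.mpr ⟨huS, Finset.mem_insert_self u Nu⟩
          rw [hST, Finset.mem_singleton] at this
          exact huv this
        refine ⟨hvS, huS, ?_⟩
        rw [hfil]
        apply Finset.Subset.antisymm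
        · intro x hx
          rcases Finset.mem_inter.mp hx with ⟨hxNu, hxS⟩
          rw [← hST]; exact Finset.mem_inter.mpr ⟨hxS, Finset.mem_insert_of_mem hxNu⟩
        · intro x hx
          rw [Finset.mem_singleton] at hx; subst hx
          exact Finset.mem_inter.mpr ⟨hvNu, hvS⟩
    have step1 : ∑ S : Finset (Fin N), w S * Asucc S u v
        = ∑ S ∈ Finset.univ.filter (fun S : Finset (Fin N) => S ∩ T = {v}), w S := by
      rw [Finset.sum_filter]
      refine Finset.sum_congr rfl fun S _ => ?_
      rw [hAsucc S]
      simp only [Matrix.of_apply]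
      by_cases hc : v ∈ S ∧ u ∉ S ∧ (Finset.univ.filter fun m => A u m ≠ 0 ∧ m ∈ S) = {v}
      · rw [if_pos hc, if_pos ((hcond S).mp hc), h1, mul_one]
      · rw [if_neg hc, if_neg (fun h => hc ((hcond S).mpr h)), mul_zero]
    rw [step1, h1, mul_one]
    have hdN : d + 1 ≤ N := by
      calc d + 1 = T.card := hcardT.symm
        _ ≤ N := by simpa using Finset.card_le_univ T
    have hcardTc : Tᶜ.card = N - (d + 1) := by
      rw [Finset.card_compl, hcardT]; simp
    have step2 : ∑ S ∈ Finset.univ.filter (fun S : Finset (Fin N) => S ∩ T = {v}), w S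
        = ∑ B ∈ Tᶜ.powerset, w (insert v B) := by
      refine Finset.sum_nbij' (fun S => S \ T) (fun B => insert v B) ?_ ?_ ?_ ?_ ?_
      · intro S hS
        rw [Finset.mem_powerset]
        intro x hx
        rw [Finset.mem_compl]
        exact (Finset.mem_sdiff.mp hx).2
      · intro B hB
        rw [Finset.mem_filter]
        refine ⟨Finset.mem_univ _, ?_⟩
        rw [Finset.mem_powerset] at hB
        ext x
        simp only [Finset.mem_inter, Finset.mem_insert, Finset.mem_singleton]
        constructor
        · rintro ⟨hx | hxB, hxT⟩
          · exact hx
          · exact absurd hxT (Finset.mem_compl.mp (hB hxB))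
        · intro hx; exact ⟨Or.inl hx, by rw [hx]; exact hvT⟩
      · intro S hS
        rw [Finset.mem_filter] at hS
        ext x
        simp only [Finset.mem_insert, Finset.mem_sdiff]
        constructor
        · rintro (hx | ⟨hxS, _⟩)
          · have hv : v ∈ S ∩ T := hS.2 ▸ Finset.mem_singleton_self v
            rw [hx]; exact (Finset.mem_inter.mp hv).1
          · exact hxS
        · intro hxS
          by_cases hxT : x ∈ T
          · left
            have : x ∈ S ∩ T := Finset.mem_inter.mpr ⟨hxS, hxT⟩
            rw [hS.2, Finset.mem_singleton] at this; exact this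
          · right; exact ⟨hxS, hxT⟩
      · intro B hB
        rw [Finset.mem_powerset] at hB
        ext x
        simp only [Finset.mem_sdiff, Finset.mem_insert]
        constructor
        · rintro ⟨hx | hxB, hxT⟩
          · exact absurd (hx ▸ hvT) hxT
          · exact hxB
        · intro hxB
          exact ⟨Or.inr hxB, Finset.mem_compl.mp (hB hxB)⟩
      · intro S hS
        rw [Finset.mem_filter] at hS
        congr 1
        ext x
        simp only [Finset.mem_insert, Finset.mem_sdiff]
        constructor
        · intro hxS
          by_cases hxT : x ∈ T
          · left
            have : x ∈ S ∩ T := Finset.mem_inter.mpr ⟨hxS, hxT⟩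
            rw [hS.2, Finset.mem_singleton] at this; exact this
          · right; exact ⟨hxS, hxT⟩
        · rintro (hx | ⟨hxS, _⟩)
          · have hv : v ∈ S ∩ T := hS.2 ▸ Finset.mem_singleton_self v
            rw [hx]; exact (Finset.mem_inter.mp hv).1
          · exact hxS
    rw [step2]
    have step3 : ∀ B ∈ Tᶜ.powerset, w (insert v B)
        = (p * (1 - p) ^ d) * (p ^ B.card * (1 - p) ^ (Tᶜ.card - B.card)) := by
      intro B hB
      rw [Finset.mem_powerset] at hB
      have hvB : v ∉ B := fun h => (Finset.mem_compl.mp (hB h)) hvT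
      have hcard : (insert v B).card = B.card + 1 := Finset.card_insert_of_notMem hvB
      have hBle : B.card ≤ N - (d + 1) := hcardTc ▸ Finset.card_le_card hB
      rw [hw, hcard, hcardTc]
      have e1 : N - (B.card + 1) = (N - (d+1) - B.card) + d := by omega
      rw [e1, pow_add, pow_succ]
      ring
    rw [Finset.sum_congr rfl step3, ← Finset.mul_sum, sum_pow_weights, mul_one]

private lemma pmax_lemma (d : ℕ) : ∀ p' ∈ Set.Ioo (0:ℝ) 1,
    p' * (1 - p') ^ d ≤ (1 / ((d : ℝ) + 1)) * (1 - 1 / ((d : ℝ) + 1)) ^ d := by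
  rintro p' ⟨h0, h1⟩
  rcases Nat.eq_zero_or_pos d with hd | hd
  · subst hd; simpa using h1.le
  have hD : (1 : ℝ) ≤ (d : ℝ) := by exact_mod_cast hd
  have hD0 : (0 : ℝ) < (d : ℝ) := lt_of_lt_of_le one_pos hD
  have hD1 : (0 : ℝ) < (d : ℝ) + 1 := by linarith
  set w₁ : ℝ := 1 / ((d : ℝ) + 1) with hw₁
  set w₂ : ℝ := (d : ℝ) / ((d : ℝ) + 1) with hw₂
  have hw₁0 : 0 < w₁ := by positivity
  have hw₂0 : 0 < w₂ := by positivity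
  have hwsum : w₁ + w₂ = 1 := by
    rw [hw₁, hw₂, ← add_div, add_comm, div_self hD1.ne']
  set z₁ : ℝ := p' / w₁ with hz₁
  set z₂ : ℝ := (1 - p') / w₂ with hz₂
  have hz₁0 : 0 ≤ z₁ := by positivity
  have hz₂0 : 0 ≤ z₂ := div_nonneg (by linarith) hw₂0.le
  have e1 : w₁ * z₁ = p' := by rw [hz₁]; field_simp
  have e2 : w₂ * z₂ = 1 - p' := by rw [hz₂]; field_simp
  have hgm : z₁ ^ w₁ * z₂ ^ w₂ ≤ 1 := by
    have h := Real.geom_mean_le_arith_mean2_weighted hw₁0.le hw₂0.le hz₁0 hz₂0 hwsum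
    rw [e1, e2] at h; linarith
  have key : z₁ * z₂ ^ d ≤ 1 := by
    have h2 : (z₁ ^ w₁ * z₂ ^ w₂) ^ ((d : ℝ) + 1) ≤ 1 ^ ((d : ℝ) + 1) :=
      Real.rpow_le_rpow (by positivity) hgm (by positivity)
    rw [Real.one_rpow] at h2
    have h3 : (z₁ ^ w₁ * z₂ ^ w₂) ^ ((d : ℝ) + 1)
        = z₁ ^ (w₁ * ((d : ℝ) + 1)) * z₂ ^ (w₂ * ((d : ℝ) + 1)) := by
      rw [Real.mul_rpow (Real.rpow_nonneg hz₁0 _) (Real.rpow_nonneg hz₂0 _),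
        ← Real.rpow_mul hz₁0, ← Real.rpow_mul hz₂0]
    have f1 : w₁ * ((d : ℝ) + 1) = 1 := by rw [hw₁]; field_simp
    have f2 : w₂ * ((d : ℝ) + 1) = (d : ℝ) := by rw [hw₂]; field_simp
    rw [h3, f1, f2, Real.rpow_one, Real.rpow_natCast] at h2
    exact h2
  have efin : (w₁ * w₂ ^ d) * (z₁ * z₂ ^ d) = p' * (1 - p') ^ d := by
    have : (w₁ * w₂ ^ d) * (z₁ * z₂ ^ d) = (w₁ * z₁) * (w₂ * z₂) ^ d := by
      rw [mul_pow]; ring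
    rw [this, e1, e2]
  have hw2e : 1 - w₁ = w₂ := by
    rw [hw₁, hw₂]; field_simp; ring
  calc p' * (1 - p') ^ d = (w₁ * w₂ ^ d) * (z₁ * z₂ ^ d) := efin.symm
    _ ≤ (w₁ * w₂ ^ d) * 1 := mul_le_mul_of_nonneg_left key (by positivity)
    _ = w₁ * (1 - w₁) ^ d := by rw [hw2e, mul_one]

set_option maxHeartbeats 2000000 in
/-- If `G` is a `d`-regular connected graph with Laplacian `L` whose smallest
positive eigenvalue is `λ₁`, then the rate of convergence `R` of the CBGA satisfies
`R ≥ 1 − 2qp(1−p)^d λ₁`; moreover `p ↦ p(1−p)^d` is maximized on `(0,1)` at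
`p* = 1/(d+1)`. -/
theorem cbga_regular_rate_lower_bound {N : ℕ} (hN : 0 < N)
    (A : Matrix (Fin N) (Fin N) ℝ)
    (hA01 : ∀ u v, A u v = 0 ∨ A u v = 1)
    (hAdiag : ∀ u, A u u = 0)
    (hconn : ∀ u v : Fin N, u ≠ v → Relation.TransGen (fun a b => A b a ≠ 0) u v)
    (d : ℕ) (hreg : ∀ u, (Finset.univ.filter fun v => A u v ≠ 0).card = d)
    (p q : ℝ) (hp : p ∈ Set.Ioo (0:ℝ) 1) (hq : q ∈ Set.Ioo (0:ℝ) 1)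
    (L : Matrix (Fin N) (Fin N) ℝ)
    (hL : L = Matrix.diagonal (fun u => ∑ v, A u v) - A)
    (lam1 : ℝ) (hlam_pos : 0 < lam1)
    (hlam_eig : ∃ w : Fin N → ℝ, w ≠ 0 ∧ L.mulVec w = lam1 • w)
    (hlam_min : ∀ μ : ℝ, 0 < μ → (∃ w : Fin N → ℝ, w ≠ 0 ∧ L.mulVec w = μ • w) → lam1 ≤ μ)
    (w : Finset (Fin N) → ℝ)
    (hw : ∀ S, w S = p ^ S.card * (1 - p) ^ (N - S.card))
    (Asucc : Finset (Fin N) → Matrix (Fin N) (Fin N) ℝ)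
    (hAsucc : ∀ S, Asucc S = Matrix.of (fun u v =>
      if v ∈ S ∧ u ∉ S ∧ (Finset.univ.filter fun m => A u m ≠ 0 ∧ m ∈ S) = {v}
      then A u v else 0))
    (P : Finset (Fin N) → Matrix (Fin N) (Fin N) ℝ)
    (hP : ∀ S, P S = 1 - q •
      (Matrix.diagonal (fun u => ∑ v, Asucc S u v) - Asucc S))
    (Ω : Matrix (Fin N) (Fin N) ℝ)
    (hΩ : Ω = 1 - (N : ℝ)⁻¹ • Matrix.of (fun _ _ => (1:ℝ)))
    (Lop : Matrix (Fin N) (Fin N) ℝ → Matrix (Fin N) (Fin N) ℝ)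
    (hLop : ∀ M, Lop M = ∑ S : Finset (Fin N), w S • ((P S)ᵀ * M * P S))
    (R : ℝ)
    (hR : R = ⨆ x0 : Fin N → ℝ, Filter.limsup
      (fun t : ℕ => ((N : ℝ)⁻¹ * (x0 ⬝ᵥ ((Lop^[t] Ω).mulVec x0))) ^ ((t : ℝ)⁻¹))
      Filter.atTop) :
    (1 - 2 * q * p * (1 - p) ^ d * lam1 ≤ R) ∧
    (∀ p' ∈ Set.Ioo (0:ℝ) 1,
      p' * (1 - p') ^ d ≤ (1 / ((d : ℝ) + 1)) * (1 - 1 / ((d : ℝ) + 1)) ^ d) := by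
  classical
  refine ⟨?_, pmax_lemma d⟩
  obtain ⟨hp0, hp1⟩ := hp
  obtain ⟨hq0, hq1⟩ := hq
  have hp1' : (0:ℝ) < 1 - p := by linarith
  have hNpos : (0:ℝ) < N := by exact_mod_cast hN
  set lamp : ℝ := p * (1 - p) ^ d with hlampdef
  have hlamp0 : 0 < lamp := by positivity
  -- weights are positive and sum to one
  have hwpos : ∀ S : Finset (Fin N), 0 < w S := fun S => by rw [hw]; positivity
  have hwsum : ∑ S : Finset (Fin N), w S = 1 := by
    have h := sum_pow_weights p (Finset.univ : Finset (Fin N))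
    rw [Finset.powerset_univ] at h
    rw [← h]
    refine Finset.sum_congr rfl fun S _ => ?_
    rw [hw S, Finset.card_univ, Fintype.card_fin]
  have hBsum : ∀ u v, ∑ S : Finset (Fin N), w S * Asucc S u v = lamp * A u v :=
    fun u v => expectAsucc A hA01 hAdiag d hreg p w hw Asucc hAsucc u v
  -- entrywise form of P S
  have hPdiag : ∀ S u, P S u u = 1 - q * ((∑ j, Asucc S u j) - Asucc S u u) := by
    intro S u
    rw [hP S]
    simp [Matrix.sub_apply, Matrix.smul_apply, Matrix.one_apply_eq,
      Matrix.diagonal_apply_eq, smul_eq_mul]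
  have hPoff : ∀ S u v, u ≠ v → P S u v = q * Asucc S u v := by
    intro S u v h
    rw [hP S]
    simp [Matrix.sub_apply, Matrix.smul_apply, Matrix.one_apply_ne h,
      Matrix.diagonal_apply_ne _ h, smul_eq_mul]
  -- expected matrix
  set Pb : Matrix (Fin N) (Fin N) ℝ := 1 - (q * lamp) • L with hPbdef
  have hLentry : ∀ u v, L u v = (if u = v then ∑ j, A u j else 0) - A u v := by
    intro u v; rw [hL]; simp [Matrix.sub_apply, Matrix.diagonal_apply]
  have hPbdiag : ∀ u, Pb u u = 1 - q * lamp * ((∑ j, A u j) - A u u) := by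
    intro u
    rw [hPbdef, hL]
    simp [Matrix.sub_apply, Matrix.smul_apply, Matrix.one_apply_eq,
      Matrix.diagonal_apply_eq, smul_eq_mul]
  have hPboff : ∀ u v, u ≠ v → Pb u v = q * lamp * A u v := by
    intro u v h
    rw [hPbdef, hL]
    simp [Matrix.sub_apply, Matrix.smul_apply, Matrix.one_apply_ne h,
      Matrix.diagonal_apply_ne _ h, smul_eq_mul]
  have hswap : ∀ u, ∑ S : Finset (Fin N), w S * ∑ j, Asucc S u j = lamp * ∑ j, A u j := by
    intro u
    have e : ∀ S : Finset (Fin N), w S * ∑ j, Asucc S u j = ∑ j, w S * Asucc S u j :=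
      fun S => Finset.mul_sum _ _ _
    rw [Finset.sum_congr rfl fun S _ => e S, Finset.sum_comm, Finset.mul_sum]
    exact Finset.sum_congr rfl fun j _ => hBsum u j
  have hPbM : ∑ S : Finset (Fin N), w S • P S = Pb := by
    ext u v
    rw [Matrix.sum_apply]
    simp only [Matrix.smul_apply, smul_eq_mul]
    by_cases h : u = v
    · subst h
      have e : ∀ S : Finset (Fin N), w S * P S u u
          = w S - q * (w S * ∑ j, Asucc S u j) + q * (w S * Asucc S u u) := by
        intro S; rw [hPdiag]; ring
      rw [Finset.sum_congr rfl fun S _ => e S, Finset.sum_add_distrib,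
        Finset.sum_sub_distrib, ← Finset.mul_sum, ← Finset.mul_sum, hswap, hBsum, hwsum,
        hPbdiag u]
      ring
    · have e : ∀ S : Finset (Fin N), w S * P S u v = q * (w S * Asucc S u v) := by
        intro S; rw [hPoff S u v h]; ring
      rw [Finset.sum_congr rfl fun S _ => e S, ← Finset.mul_sum, hBsum, hPboff u v h]
      ring
  -- Ω facts
  have hΩvec : ∀ z : Fin N → ℝ, Ω.mulVec z = fun i => z i - (N:ℝ)⁻¹ * ∑ j, z j := by
    intro z
    rw [hΩ, Matrix.sub_mulVec, Matrix.one_mulVec, Matrix.smul_mulVec]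
    funext i
    simp only [Pi.sub_apply, Pi.smul_apply, smul_eq_mul]
    congr 1
    simp [Matrix.mulVec, dotProduct]
  have hquadcalc : ∀ z : Fin N → ℝ,
      ∑ i, (z i - (N:ℝ)⁻¹ * ∑ j, z j) * (z i - (N:ℝ)⁻¹ * ∑ j, z j)
      = z ⬝ᵥ z - (N:ℝ)⁻¹ * (∑ j, z j)^2 := by
    intro z
    have expand : ∀ i : Fin N, (z i - (N:ℝ)⁻¹ * ∑ j, z j) * (z i - (N:ℝ)⁻¹ * ∑ j, z j)
        = z i * z i - 2 * ((N:ℝ)⁻¹ * ∑ j, z j) * z i + ((N:ℝ)⁻¹ * ∑ j, z j)^2 := by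
      intro i; ring
    rw [Finset.sum_congr rfl fun i _ => expand i, Finset.sum_add_distrib,
      Finset.sum_sub_distrib, ← Finset.mul_sum, Finset.sum_const, Finset.card_univ,
      Fintype.card_fin, nsmul_eq_mul]
    have hNne : (N:ℝ) ≠ 0 := hNpos.ne'
    simp only [dotProduct]
    field_simp
    ring
  have hgg : ∀ z : Fin N → ℝ,
      (Ω.mulVec z) ⬝ᵥ (Ω.mulVec z) = z ⬝ᵥ z - (N:ℝ)⁻¹ * (∑ j, z j)^2 := by
    intro z
    rw [hΩvec]
    simp only [dotProduct]
    exact hquadcalc z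
  have hquad : ∀ z : Fin N → ℝ,
      z ⬝ᵥ Ω.mulVec z = z ⬝ᵥ z - (N:ℝ)⁻¹ * (∑ j, z j)^2 := by
    intro z
    rw [hΩvec]
    have e0 : z ⬝ᵥ (fun i => z i - (N:ℝ)⁻¹ * ∑ j, z j)
        = ∑ i, z i * (z i - (N:ℝ)⁻¹ * ∑ j, z j) := by
      simp [dotProduct]
    have e1 : ∀ i : Fin N, z i * (z i - (N:ℝ)⁻¹ * ∑ j, z j)
        = z i * z i - ((N:ℝ)⁻¹ * ∑ j, z j) * z i := fun i => by ring
    have e2 : z ⬝ᵥ z = ∑ i, z i * z i := by simp [dotProduct]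
    rw [e0, Finset.sum_congr rfl fun i _ => e1 i, Finset.sum_sub_distrib, ← Finset.mul_sum,
      e2]
    ring
  have hdot_nn : ∀ z : Fin N → ℝ, 0 ≤ z ⬝ᵥ z :=
    fun z => Finset.sum_nonneg fun i _ => mul_self_nonneg _
  have hquad_eq : ∀ z : Fin N → ℝ, z ⬝ᵥ Ω.mulVec z = (Ω.mulVec z) ⬝ᵥ (Ω.mulVec z) := by
    intro z; rw [hquad, hgg]
  -- entries of Asucc are 0/1, at most one per row
  have hAscond : ∀ S u v, Asucc S u v ≠ 0 →
      (v ∈ S ∧ u ∉ S ∧ (Finset.univ.filter fun m => A u m ≠ 0 ∧ m ∈ S) = {v}) := by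
    intro S u v h
    rw [hAsucc] at h
    simp only [Matrix.of_apply] at h
    by_cases hc : v ∈ S ∧ u ∉ S ∧ (Finset.univ.filter fun m => A u m ≠ 0 ∧ m ∈ S) = {v}
    · exact hc
    · rw [if_neg hc] at h; exact absurd rfl h
  have hAs01 : ∀ S u v, Asucc S u v = 0 ∨ Asucc S u v = 1 := by
    intro S u v
    rw [hAsucc]
    simp only [Matrix.of_apply]
    split
    · exact hA01 u v
    · exact Or.inl rfl
  have hAs_uniq : ∀ S u v₁ v₂, Asucc S u v₁ ≠ 0 → Asucc S u v₂ ≠ 0 → v₁ = v₂ := by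
    intro S u v₁ v₂ h1 h2
    have c1 := (hAscond S u v₁ h1).2.2
    have c2 := (hAscond S u v₂ h2).2.2
    have : ({v₁} : Finset (Fin N)) = {v₂} := c1 ▸ c2
    exact Finset.singleton_injective this
  have hAsdiag : ∀ S u, Asucc S u u = 0 := by
    intro S u
    by_contra h
    have hc := hAscond S u u h
    exact hc.2.1 hc.1
  have hrs01 : ∀ S u, (∑ j, Asucc S u j) = 0 ∨ (∑ j, Asucc S u j) = 1 := by
    intro S u
    by_cases hex : ∃ j, Asucc S u j ≠ 0
    · obtain ⟨j0, hj0⟩ := hex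
      right
      rw [Finset.sum_eq_single j0]
      · rcases hAs01 S u j0 with h | h
        · exact absurd h hj0
        · exact h
      · intro b _ hb
        by_contra hb0
        exact hb (hAs_uniq S u b j0 hb0 hj0)
      · intro h; exact absurd (Finset.mem_univ j0) h
    · left
      push_neg at hex
      exact Finset.sum_eq_zero fun j _ => hex j
  have hPabs : ∀ S u v, |P S u v| ≤ 1 := by
    intro S u v
    by_cases h : u = v
    · subst h
      rw [hPdiag, hAsdiag, sub_zero]
      rcases hrs01 S u with h0 | h0 <;> rw [h0]
      · simp
      · rw [abs_le]; constructor <;> nlinarith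
    · rw [hPoff S u v h]
      rcases hAs01 S u v with h0 | h0 <;> rw [h0]
      · simp
      · rw [abs_le]; constructor <;> nlinarith
  -- crude norm bound for P S
  have hPnormBound : ∀ S (y : Fin N → ℝ),
      ((P S).mulVec y) ⬝ᵥ ((P S).mulVec y) ≤ (N:ℝ)^2 * (y ⬝ᵥ y) := by
    intro S y
    have hyy : y ⬝ᵥ y = ∑ j, y j ^ 2 := by
      simp [dotProduct, sq]
    have hsq : ∀ u, ((P S).mulVec y u) * ((P S).mulVec y u) ≤ (N:ℝ) * (y ⬝ᵥ y) := by
      intro u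
      have h1 : |(P S).mulVec y u| ≤ ∑ j, |y j| := by
        calc |(P S).mulVec y u| = |∑ j, P S u j * y j| := by
              simp [Matrix.mulVec, dotProduct]
          _ ≤ ∑ j, |P S u j * y j| := Finset.abs_sum_le_sum_abs _ _
          _ ≤ ∑ j, |y j| := Finset.sum_le_sum fun j _ => by
              rw [abs_mul]
              exact mul_le_of_le_one_left (abs_nonneg _) (hPabs S u j)
      have h2 : (∑ j, |y j|)^2 ≤ (N:ℝ) * (y ⬝ᵥ y) := by
        have h := Finset.sum_mul_sq_le_sq_mul_sq Finset.univ (fun _ : Fin N => (1:ℝ))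
          (fun j => |y j|)
        simp only [one_mul, one_pow, Finset.sum_const, Finset.card_univ, Fintype.card_fin,
          nsmul_eq_mul, sq_abs] at h
        rw [hyy]
        calc (∑ j, |y j|)^2 ≤ (N:ℝ) * 1 * ∑ j, y j ^ 2 := h
          _ = (N:ℝ) * ∑ j, y j ^ 2 := by ring
      calc ((P S).mulVec y u) * ((P S).mulVec y u) = |(P S).mulVec y u|^2 := by
            rw [sq_abs, sq]
        _ ≤ (∑ j, |y j|)^2 := by
            apply pow_le_pow_left₀ (abs_nonneg _) h1
        _ ≤ (N:ℝ) * (y ⬝ᵥ y) := h2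
    calc ((P S).mulVec y) ⬝ᵥ ((P S).mulVec y)
        = ∑ u, ((P S).mulVec y u) * ((P S).mulVec y u) := by
          simp [dotProduct]
      _ ≤ ∑ _u : Fin N, (N:ℝ) * (y ⬝ᵥ y) := Finset.sum_le_sum fun u _ => hsq u
      _ = (N:ℝ)^2 * (y ⬝ᵥ y) := by
          rw [Finset.sum_const, Finset.card_univ, Fintype.card_fin, nsmul_eq_mul]
          ring
  -- quadratic form of Lop
  have hLopQuad : ∀ (M : Matrix (Fin N) (Fin N) ℝ) (y : Fin N → ℝ),
      y ⬝ᵥ (Lop M).mulVec y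
      = ∑ S : Finset (Fin N), w S * (((P S).mulVec y) ⬝ᵥ M.mulVec ((P S).mulVec y)) := by
    intro M y
    rw [hLop, sum_mulVec', dotProduct_sum']
    refine Finset.sum_congr rfl fun S _ => ?_
    rw [Matrix.smul_mulVec, dotProduct_smul, smul_eq_mul]
    congr 1
    rw [← Matrix.mulVec_mulVec, ← Matrix.mulVec_mulVec, Matrix.dotProduct_mulVec,
      Matrix.vecMul_transpose]
  -- upper bound and nonnegativity of the quadratic forms
  have hFbound : ∀ t : ℕ, ∀ y : Fin N → ℝ,
      0 ≤ y ⬝ᵥ (Lop^[t] Ω).mulVec y ∧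
      y ⬝ᵥ (Lop^[t] Ω).mulVec y ≤ ((N:ℝ)^2)^t * (y ⬝ᵥ y) := by
    intro t
    induction t with
    | zero =>
      intro y
      rw [Function.iterate_zero_apply, pow_zero, one_mul]
      constructor
      · rw [hquad_eq]; exact hdot_nn _
      · rw [hquad]
        have h1 : 0 ≤ (N:ℝ)⁻¹ * (∑ j, y j)^2 := by positivity
        linarith
    | succ t ih =>
      intro y
      rw [Function.iterate_succ_apply', hLopQuad]
      constructor
      · exact Finset.sum_nonneg fun S _ => mul_nonneg (hwpos S).le (ih _).1
      · calc ∑ S : Finset (Fin N), w S * (((P S).mulVec y) ⬝ᵥ (Lop^[t] Ω).mulVec ((P S).mulVec y))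
            ≤ ∑ S : Finset (Fin N), w S * (((N:ℝ)^2)^t * ((N:ℝ)^2 * (y ⬝ᵥ y))) := by
              refine Finset.sum_le_sum fun S _ => ?_
              refine mul_le_mul_of_nonneg_left ?_ (hwpos S).le
              calc ((P S).mulVec y) ⬝ᵥ (Lop^[t] Ω).mulVec ((P S).mulVec y)
                  ≤ ((N:ℝ)^2)^t * (((P S).mulVec y) ⬝ᵥ ((P S).mulVec y)) := (ih _).2
                _ ≤ ((N:ℝ)^2)^t * ((N:ℝ)^2 * (y ⬝ᵥ y)) := by
                    exact mul_le_mul_of_nonneg_left (hPnormBound S y) (by positivity)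
          _ = ((N:ℝ)^2)^(t+1) * (y ⬝ᵥ y) := by
              rw [← Finset.sum_mul, hwsum, one_mul]
              ring
  -- lower bound: Jensen
  have hFlow : ∀ t : ℕ, ∀ y : Fin N → ℝ,
      (Ω.mulVec ((Pb^t).mulVec y)) ⬝ᵥ (Ω.mulVec ((Pb^t).mulVec y))
      ≤ y ⬝ᵥ (Lop^[t] Ω).mulVec y := by
    intro t
    induction t with
    | zero =>
      intro y
      rw [Function.iterate_zero_apply, pow_zero, Matrix.one_mulVec]
      exact le_of_eq (hquad_eq y).symm
    | succ t ih =>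
      intro y
      rw [Function.iterate_succ_apply', hLopQuad]
      have step1 : ∑ S : Finset (Fin N),
            w S * ((Ω.mulVec ((Pb^t).mulVec ((P S).mulVec y)))
              ⬝ᵥ (Ω.mulVec ((Pb^t).mulVec ((P S).mulVec y))))
          ≤ ∑ S : Finset (Fin N),
            w S * (((P S).mulVec y) ⬝ᵥ (Lop^[t] Ω).mulVec ((P S).mulVec y)) :=
        Finset.sum_le_sum fun S _ => mul_le_mul_of_nonneg_left (ih _) (hwpos S).le
      refine le_trans ?_ step1
      set v : Finset (Fin N) → (Fin N → ℝ) :=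
        fun S => Ω.mulVec ((Pb^t).mulVec ((P S).mulVec y)) with hv
      have hZ : Ω.mulVec ((Pb^(t+1)).mulVec y) = ∑ S : Finset (Fin N), w S • v S := by
        have hPby : (∑ S : Finset (Fin N), w S • (P S).mulVec y) = Pb.mulVec y := by
          rw [← hPbM, sum_mulVec']
          exact Finset.sum_congr rfl fun S _ => (Matrix.smul_mulVec _ _ _).symm
        have e1 : (Pb^(t+1)).mulVec y = (Pb^t).mulVec (Pb.mulVec y) := by
          rw [Matrix.mulVec_mulVec, ← pow_succ]
        rw [e1, ← hPby]
        have e2 : (Pb^t).mulVec (∑ S : Finset (Fin N), w S • (P S).mulVec y)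
            = ∑ S : Finset (Fin N), w S • (Pb^t).mulVec ((P S).mulVec y) := by
          have lin : ∀ (M : Matrix (Fin N) (Fin N) ℝ) (f : Finset (Fin N) → Fin N → ℝ),
              M.mulVec (∑ S : Finset (Fin N), f S) = ∑ S : Finset (Fin N), M.mulVec (f S) := by
            intro M f
            ext u
            simp only [Matrix.mulVec, dotProduct, Finset.sum_apply, Finset.mul_sum]
            exact Finset.sum_comm
          rw [lin]
          exact Finset.sum_congr rfl fun S _ => Matrix.mulVec_smul _ _ _
        rw [e2]
        have e3 : Ω.mulVec (∑ S : Finset (Fin N), w S • (Pb^t).mulVec ((P S).mulVec y))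
            = ∑ S : Finset (Fin N), w S • Ω.mulVec ((Pb^t).mulVec ((P S).mulVec y)) := by
          have lin : ∀ (M : Matrix (Fin N) (Fin N) ℝ) (f : Finset (Fin N) → Fin N → ℝ),
              M.mulVec (∑ S : Finset (Fin N), f S) = ∑ S : Finset (Fin N), M.mulVec (f S) := by
            intro M f
            ext u
            simp only [Matrix.mulVec, dotProduct, Finset.sum_apply, Finset.mul_sum]
            exact Finset.sum_comm
          rw [lin]
          exact Finset.sum_congr rfl fun S _ => Matrix.mulVec_smul _ _ _
        rw [e3]
      rw [hZ]
      have expand : (∑ S : Finset (Fin N), w S • v S) ⬝ᵥ (∑ S : Finset (Fin N), w S • v S)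
          = ∑ i, (∑ S : Finset (Fin N), w S * v S i)^2 := by
        simp only [dotProduct, Finset.sum_apply, Pi.smul_apply, smul_eq_mul, sq]
      have expand2 : ∑ S : Finset (Fin N), w S * (v S ⬝ᵥ v S)
          = ∑ i, ∑ S : Finset (Fin N), w S * (v S i)^2 := by
        simp only [dotProduct, Finset.mul_sum]
        rw [Finset.sum_comm]
        simp [sq]
      rw [expand, expand2]
      exact Finset.sum_le_sum fun i _ =>
        jensen_sq Finset.univ w (fun S => v S i) (fun S _ => (hwpos S).le) hwsum
  -- the eigenvector
  obtain ⟨x0, hx0ne, hx0eig⟩ := hlam_eig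
  set r : ℝ := 1 - q * lamp * lam1 with hrdef
  have hPbx0 : Pb.mulVec x0 = r • x0 := by
    rw [hPbdef, Matrix.sub_mulVec, Matrix.one_mulVec, Matrix.smul_mulVec, hx0eig]
    funext i
    simp only [Pi.sub_apply, Pi.smul_apply, smul_eq_mul, hrdef]
    ring
  have hPbtx0 : ∀ t : ℕ, (Pb^t).mulVec x0 = (r^t) • x0 := by
    intro t
    induction t with
    | zero => simp [Matrix.one_mulVec]
    | succ t ih =>
      rw [pow_succ, ← Matrix.mulVec_mulVec, hPbx0, Matrix.mulVec_smul, ih]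
      funext i
      simp only [Pi.smul_apply, smul_eq_mul]
      ring
  -- c0 > 0
  set c0 : ℝ := (Ω.mulVec x0) ⬝ᵥ (Ω.mulVec x0) with hc0def
  have hc0nn : 0 ≤ c0 := hdot_nn _
  have hc0pos : 0 < c0 := by
    rcases hc0nn.lt_or_eq with h | h
    · exact h
    · exfalso
      have hΩz : Ω.mulVec x0 = 0 := dotProduct_self_eq_zero.mp h.symm
      have hconst : ∀ i, x0 i = (N:ℝ)⁻¹ * ∑ j, x0 j := by
        intro i
        have := congrFun hΩz i
        rw [hΩvec] at this
        simp only [Pi.zero_apply] at this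
        linarith
      have hLrow : ∀ u, ∑ j, L u j = 0 := by
        intro u
        simp only [hLentry]
        rw [Finset.sum_sub_distrib, Finset.sum_ite_eq]
        simp
      have hLx0 : L.mulVec x0 = 0 := by
        funext u
        have : L.mulVec x0 u = ∑ j, L u j * ((N:ℝ)⁻¹ * ∑ k, x0 k) := by
          simp only [Matrix.mulVec, dotProduct]
          exact Finset.sum_congr rfl fun j _ => by rw [← hconst j]
        rw [this, ← Finset.sum_mul, hLrow u, zero_mul]
        rfl
      rw [hLx0] at hx0eig
      apply hx0ne
      funext i
      have hzz := congrFun hx0eig.symm i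
      simp only [Pi.smul_apply, smul_eq_mul, Pi.zero_apply] at hzz
      exact (mul_eq_zero.mp hzz).resolve_left hlam_pos.ne'
  -- lower bound on the quadratic form sequence at x0
  have hlow_t : ∀ t : ℕ,
      (N:ℝ)⁻¹ * c0 * (r^2)^t ≤ (N:ℝ)⁻¹ * (x0 ⬝ᵥ (Lop^[t] Ω).mulVec x0) := by
    intro t
    have h := hFlow t x0
    rw [hPbtx0 t, Matrix.mulVec_smul] at h
    have e : ((r^t) • Ω.mulVec x0) ⬝ᵥ ((r^t) • Ω.mulVec x0) = (r^2)^t * c0 := by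
      rw [smul_dotProduct, dotProduct_smul, smul_eq_mul, smul_eq_mul,
        ← hc0def, ← mul_assoc, ← pow_add, ← two_mul, pow_mul]
    rw [e] at h
    calc (N:ℝ)⁻¹ * c0 * (r^2)^t = (N:ℝ)⁻¹ * ((r^2)^t * c0) := by ring
      _ ≤ (N:ℝ)⁻¹ * (x0 ⬝ᵥ (Lop^[t] Ω).mulVec x0) := by
          exact mul_le_mul_of_nonneg_left h (by positivity)
  -- rpow helpers
  have hcollapse : ∀ (K x : ℝ), 0 < K → 0 ≤ x → ∀ t : ℕ, 1 ≤ t →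
      ((K * x^t) ^ ((t:ℝ)⁻¹)) = K ^ ((t:ℝ)⁻¹) * x := by
    intro K x hK hx t ht
    have ht0 : (t:ℝ) ≠ 0 := by
      have : (0:ℝ) < t := by exact_mod_cast ht
      exact this.ne'
    rw [Real.mul_rpow hK.le (pow_nonneg hx t)]
    congr 1
    rw [← Real.rpow_natCast x t, ← Real.rpow_mul hx, mul_inv_cancel₀ ht0, Real.rpow_one]
  have htends : ∀ K : ℝ, 0 < K →
      Tendsto (fun t : ℕ => K ^ ((t:ℝ)⁻¹)) atTop (nhds 1) := by
    intro K hK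
    have h1 : Tendsto (fun t : ℕ => ((t:ℝ))⁻¹) atTop (nhds 0) :=
      tendsto_inv_atTop_nhds_zero_nat
    have h2 : (fun t : ℕ => K ^ ((t:ℝ)⁻¹))
        = fun t : ℕ => Real.exp (Real.log K * ((t:ℝ)⁻¹)) := by
      funext t; rw [Real.rpow_def_of_pos hK]
    rw [h2]
    have h3 : Tendsto (fun t : ℕ => Real.log K * ((t:ℝ)⁻¹)) atTop (nhds 0) := by
      have := h1.const_mul (Real.log K)
      simpa using this
    have h4 := (Real.continuous_exp.tendsto 0).comp h3
    simpa [Real.exp_zero, Function.comp_def] using h4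
  -- sequence nonnegativity
  have hseq_nn : ∀ (x : Fin N → ℝ) (t : ℕ),
      0 ≤ ((N:ℝ)⁻¹ * (x ⬝ᵥ (Lop^[t] Ω).mulVec x)) ^ ((t:ℝ)⁻¹) :=
    fun x t => Real.rpow_nonneg (mul_nonneg (by positivity) (hFbound t x).1) _
  -- per-x facts: boundedness and limsup upper bound
  have hseq_facts : ∀ x : Fin N → ℝ,
      IsBoundedUnder (· ≤ ·) atTop
        (fun t : ℕ => ((N:ℝ)⁻¹ * (x ⬝ᵥ (Lop^[t] Ω).mulVec x)) ^ ((t:ℝ)⁻¹)) ∧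
      limsup (fun t : ℕ => ((N:ℝ)⁻¹ * (x ⬝ᵥ (Lop^[t] Ω).mulVec x)) ^ ((t:ℝ)⁻¹)) atTop
        ≤ (N:ℝ)^2 := by
    intro x
    set C : ℝ := max 1 ((N:ℝ)⁻¹ * (x ⬝ᵥ x)) with hCdef
    have hC1 : 1 ≤ C := le_max_left _ _
    have hC0 : 0 < C := lt_of_lt_of_le one_pos hC1
    have hub : ∀ t : ℕ, 1 ≤ t →
        ((N:ℝ)⁻¹ * (x ⬝ᵥ (Lop^[t] Ω).mulVec x)) ^ ((t:ℝ)⁻¹)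
          ≤ C ^ ((t:ℝ)⁻¹) * (N:ℝ)^2 := by
      intro t ht
      have ha0 : 0 ≤ (N:ℝ)⁻¹ * (x ⬝ᵥ (Lop^[t] Ω).mulVec x) :=
        mul_nonneg (by positivity) (hFbound t x).1
      have ha1 : (N:ℝ)⁻¹ * (x ⬝ᵥ (Lop^[t] Ω).mulVec x) ≤ C * ((N:ℝ)^2)^t := by
        have h1 := (hFbound t x).2
        have h2 : (N:ℝ)⁻¹ * (x ⬝ᵥ (Lop^[t] Ω).mulVec x)
            ≤ (N:ℝ)⁻¹ * (((N:ℝ)^2)^t * (x ⬝ᵥ x)) :=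
          mul_le_mul_of_nonneg_left h1 (by positivity)
        have h3 : (N:ℝ)⁻¹ * (((N:ℝ)^2)^t * (x ⬝ᵥ x))
            = ((N:ℝ)⁻¹ * (x ⬝ᵥ x)) * ((N:ℝ)^2)^t := by ring
        have h4 : ((N:ℝ)⁻¹ * (x ⬝ᵥ x)) * ((N:ℝ)^2)^t ≤ C * ((N:ℝ)^2)^t :=
          mul_le_mul_of_nonneg_right (le_max_right _ _) (by positivity)
        linarith
      calc ((N:ℝ)⁻¹ * (x ⬝ᵥ (Lop^[t] Ω).mulVec x)) ^ ((t:ℝ)⁻¹)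
          ≤ (C * ((N:ℝ)^2)^t) ^ ((t:ℝ)⁻¹) :=
            Real.rpow_le_rpow ha0 ha1 (by positivity)
        _ = C ^ ((t:ℝ)⁻¹) * (N:ℝ)^2 := hcollapse C ((N:ℝ)^2) hC0 (by positivity) t ht
    have hbdd : IsBoundedUnder (· ≤ ·) atTop
        (fun t : ℕ => ((N:ℝ)⁻¹ * (x ⬝ᵥ (Lop^[t] Ω).mulVec x)) ^ ((t:ℝ)⁻¹)) := by
      refine ⟨C * (N:ℝ)^2, ?_⟩
      rw [Filter.eventually_map]
      rw [Filter.eventually_atTop]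
      refine ⟨1, fun t ht => ?_⟩
      have h5 : C ^ ((t:ℝ)⁻¹) ≤ C := by
        have htinv : ((t:ℝ))⁻¹ ≤ 1 := by
          have h1t : (1:ℝ) ≤ t := by exact_mod_cast ht
          rw [inv_le_one_iff₀]
          right; exact h1t
        calc C ^ ((t:ℝ)⁻¹) ≤ C ^ (1:ℝ) :=
              Real.rpow_le_rpow_of_exponent_le hC1 htinv
          _ = C := Real.rpow_one C
      calc ((N:ℝ)⁻¹ * (x ⬝ᵥ (Lop^[t] Ω).mulVec x)) ^ ((t:ℝ)⁻¹)
          ≤ C ^ ((t:ℝ)⁻¹) * (N:ℝ)^2 := hub t ht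
        _ ≤ C * (N:ℝ)^2 := mul_le_mul_of_nonneg_right h5 (by positivity)
    refine ⟨hbdd, ?_⟩
    have hv_tendsto : Tendsto (fun t : ℕ => C ^ ((t:ℝ)⁻¹) * (N:ℝ)^2) atTop
        (nhds ((N:ℝ)^2)) := by
      have := (htends C hC0).mul_const ((N:ℝ)^2)
      simpa using this
    have hmono := Filter.limsup_le_limsup (f := atTop)
      (u := fun t : ℕ => ((N:ℝ)⁻¹ * (x ⬝ᵥ (Lop^[t] Ω).mulVec x)) ^ ((t:ℝ)⁻¹))
      (v := fun t : ℕ => C ^ ((t:ℝ)⁻¹) * (N:ℝ)^2)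
      (Filter.eventually_atTop.mpr ⟨1, hub⟩)
      (Filter.isCoboundedUnder_le_of_eventually_le atTop
        (Filter.Eventually.of_forall fun t => hseq_nn x t))
      hv_tendsto.isBoundedUnder_le
    rw [hv_tendsto.limsup_eq] at hmono
    exact hmono
  -- lower bound on limsup at x0
  have hlower : r^2 ≤ limsup
      (fun t : ℕ => ((N:ℝ)⁻¹ * (x0 ⬝ᵥ (Lop^[t] Ω).mulVec x0)) ^ ((t:ℝ)⁻¹)) atTop := by
    set K : ℝ := (N:ℝ)⁻¹ * c0 with hKdef
    have hKpos : 0 < K := by positivity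
    have hb_tendsto : Tendsto (fun t : ℕ => K ^ ((t:ℝ)⁻¹) * r^2) atTop (nhds (r^2)) := by
      have := (htends K hKpos).mul_const (r^2)
      simpa using this
    have hble : ∀ t : ℕ, 1 ≤ t →
        K ^ ((t:ℝ)⁻¹) * r^2
          ≤ ((N:ℝ)⁻¹ * (x0 ⬝ᵥ (Lop^[t] Ω).mulVec x0)) ^ ((t:ℝ)⁻¹) := by
      intro t ht
      have h1 : (K * (r^2)^t) ^ ((t:ℝ)⁻¹)
          ≤ ((N:ℝ)⁻¹ * (x0 ⬝ᵥ (Lop^[t] Ω).mulVec x0)) ^ ((t:ℝ)⁻¹) := by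
        refine Real.rpow_le_rpow (by positivity) ?_ (by positivity)
        have := hlow_t t
        calc K * (r^2)^t = (N:ℝ)⁻¹ * c0 * (r^2)^t := by rw [hKdef]
          _ ≤ (N:ℝ)⁻¹ * (x0 ⬝ᵥ (Lop^[t] Ω).mulVec x0) := hlow_t t
      rw [hcollapse K (r^2) hKpos (sq_nonneg r) t ht] at h1
      exact h1
    have h := Filter.limsup_le_limsup (f := atTop)
      (u := fun t : ℕ => K ^ ((t:ℝ)⁻¹) * r^2)
      (v := fun t : ℕ => ((N:ℝ)⁻¹ * (x0 ⬝ᵥ (Lop^[t] Ω).mulVec x0)) ^ ((t:ℝ)⁻¹))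
      (Filter.eventually_atTop.mpr ⟨1, hble⟩)
      (hb_tendsto.isBoundedUnder_ge.isCoboundedUnder_le)
      (hseq_facts x0).1
    rw [hb_tendsto.limsup_eq] at h
    exact h
  -- assemble
  have hBddR : BddAbove (Set.range fun x : Fin N → ℝ => limsup
      (fun t : ℕ => ((N:ℝ)⁻¹ * (x ⬝ᵥ (Lop^[t] Ω).mulVec x)) ^ ((t:ℝ)⁻¹)) atTop) := by
    refine ⟨(N:ℝ)^2, ?_⟩
    rintro _ ⟨x, rfl⟩
    exact (hseq_facts x).2
  have hfinal : r^2 ≤ R := by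
    rw [hR]
    exact le_trans hlower (le_ciSup hBddR x0)
  have hineq : 1 - 2 * q * p * (1 - p) ^ d * lam1 ≤ r^2 := by
    rw [hrdef, hlampdef]
    nlinarith [sq_nonneg (q * (p * (1 - p)^d) * lam1)]
  linarith
end

section
/- If C is a Cayley matrix over an Abelian group G (i.e., C_{hg} = π_{h−g} for some generating vector π), and L is the mean-square operator L(M) = E[P(t)ᵀ M P(t)] for the BGA or CBGA on a Cayley graph over G, then L(C) is also a Cayley matrix over G. -/
open Matrix Finset

/-- If `C` is a Cayley matrix over a finite Abelian group `G` and `𝓛` is the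
mean-square operator `𝓛(M) = E[P(t)ᵀ M P(t)]` of a randomized algorithm (such as the BGA
or CBGA on a Cayley graph over `G`) whose random matrix `P(t)` has a distribution
invariant under group translations, then `𝓛(C)` is also a Cayley matrix over `G`. -/
theorem cayley_invariance_of_mean_square_operator
    {G : Type*} [AddCommGroup G] [Fintype G] [DecidableEq G]
    {ι : Type*} [Fintype ι]
    (w : ι → ℝ) (P : ι → Matrix G G ℝ)
    (hw : ∀ i, 0 ≤ w i) (hwsum : ∑ i, w i = 1)
    (hstoch : ∀ i u, ∑ v, P i u v = 1)
    (hinv : ∀ g : G, ∃ e : Equiv.Perm ι,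
      ∀ i, w (e i) = w i ∧ ∀ h k, P (e i) h k = P i (h - g) (k - g))
    (C : Matrix G G ℝ) (hC : ∃ c : G → ℝ, ∀ h g, C h g = c (h - g)) :
    ∃ c' : G → ℝ, ∀ h g, (∑ i, w i • ((P i)ᵀ * C * P i)) h g = c' (h - g) := by
  obtain ⟨c, hc⟩ := hC
  refine ⟨fun d => (∑ i, w i • ((P i)ᵀ * C * P i)) d 0, fun h g => ?_⟩
  obtain ⟨e, he⟩ := hinv g
  simp only [Matrix.sum_apply, Matrix.smul_apply, smul_eq_mul]
  rw [← Equiv.sum_comp e (fun i => w i * ((P i)ᵀ * C * P i) h g)]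
  refine Finset.sum_congr rfl fun i _ => ?_
  rw [(he i).1]
  congr 1
  simp only [Matrix.mul_apply, Matrix.transpose_apply, (he i).2]
  rw [← Equiv.sum_comp (Equiv.addRight g)
    (fun b => (∑ a, P i (a - g) (h - g) * C a b) * P i (b - g) (g - g))]
  refine Finset.sum_congr rfl fun b _ => ?_
  simp only [Equiv.coe_addRight, add_sub_cancel_right, sub_self, sub_zero]
  congr 1
  rw [← Equiv.sum_comp (Equiv.addRight g)
    (fun a => P i (a - g) (h - g) * C a (b + g))]
  refine Finset.sum_congr rfl fun a _ => ?_
  simp only [Equiv.coe_addRight, add_sub_cancel_right]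
  congr 1
  rw [hc, hc]
  congr 1
  abel
end

section
/- Let M be the mean-square recursion matrix of a broadcast gossip algorithm on a G-Cayley graph, defined by M_{uv} = ∑_k E[P(t)_{k+v,u} P(t)_{k,0}]. If almost surely P(t)_{uu} ≥ δ > 0 for all u, then the graph of the adjacency matrix A is contained in the graph of Mᵀ, which is contained in the graph of A + Aᵀ + AᵀA. -/
open Matrix Finset

/-- Let `M` be the mean-square recursion matrix of a broadcast gossip
algorithm on a `G`-Cayley graph, `M_{uv} = ∑_k E[P(t)_{k+v,u} P(t)_{k,0}]`, where `P(t)`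
is a random stochastic matrix adapted to `A + I` with translation-invariant graph,
whose expected matrix is supported on the edges of `A`, and with `P(t)_{uu} ≥ δ > 0`
almost surely. Then the graph of `A` is contained in the graph of `Mᵀ` (i.e. for
`u ≠ v`, `A v u ≠ 0 → Mᵀ v u ≠ 0`), which in turn is contained in the graph of
`A + Aᵀ + AᵀA`. -/
theorem msa_matrix_graph_inclusions
    {G : Type*} [AddCommGroup G] [Fintype G] [DecidableEq G]
    {ι : Type*} [Fintype ι]
    (w : ι → ℝ) (P : ι → Matrix G G ℝ) (A : Matrix G G ℝ)
    (hw : ∀ i, 0 ≤ w i) (hwsum : ∑ i, w i = 1)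
    (hA01 : ∀ u v, A u v = 0 ∨ A u v = 1)
    (hAdiag : ∀ u, A u u = 0)
    (hshift : ∀ h g k : G, A (h + k) (g + k) = A h g)
    (hPnn : ∀ i u v, 0 ≤ P i u v)
    (hPstoch : ∀ i u, ∑ v, P i u v = 1)
    (hadapt : ∀ i u v, P i u v ≠ 0 → u = v ∨ A u v ≠ 0)
    (δ : ℝ) (hδ : 0 < δ) (hdiag : ∀ i u, δ ≤ P i u u)
    (hmean : ∀ u v, u ≠ v → A u v ≠ 0 → 0 < ∑ i, w i * P i u v)
    (M : Matrix G G ℝ)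
    (hM : ∀ u v, M u v = ∑ k, ∑ i, w i * (P i (k + v) u * P i k 0)) :
    (∀ u v : G, u ≠ v → A v u ≠ 0 → Mᵀ v u ≠ 0) ∧
    (∀ u v : G, u ≠ v → Mᵀ v u ≠ 0 → (A + Aᵀ + Aᵀ * A) v u ≠ 0) := by

  have hAnn : ∀ u v : G, (0:ℝ) ≤ A u v := fun u v => by
    rcases hA01 u v with h | h <;> simp [h]
  constructor
  · intro u v huv hAvu
    rw [Matrix.transpose_apply, hM]
    have hterm_nn : ∀ k : G, 0 ≤ ∑ i, w i * (P i (k + v) u * P i k 0) := fun k =>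
      Finset.sum_nonneg fun i _ =>
        mul_nonneg (hw i) (mul_nonneg (hPnn _ _ _) (hPnn _ _ _))
    have hmean' := hmean v u (Ne.symm huv) hAvu
    have h0 : δ * ∑ i, w i * P i v u ≤ ∑ i, w i * (P i ((0:G) + v) u * P i 0 0) := by
      rw [Finset.mul_sum]
      refine Finset.sum_le_sum fun i _ => ?_
      rw [zero_add]
      have hd := hdiag i (0:G)
      nlinarith [mul_nonneg (mul_nonneg (hw i) (hPnn i v u)) (sub_nonneg.mpr hd)]
    have hpos : 0 < ∑ i, w i * (P i ((0:G) + v) u * P i 0 0) :=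
      lt_of_lt_of_le (mul_pos hδ hmean') h0
    have hle : ∑ i, w i * (P i ((0:G) + v) u * P i 0 0)
        ≤ ∑ k, ∑ i, w i * (P i (k + v) u * P i k 0) :=
      Finset.single_le_sum (fun k _ => hterm_nn k) (Finset.mem_univ (0:G))
    exact ne_of_gt (lt_of_lt_of_le hpos hle)
  · intro u v huv hM'
    rw [Matrix.transpose_apply, hM] at hM'
    obtain ⟨k, -, hk⟩ := Finset.exists_ne_zero_of_sum_ne_zero hM'
    obtain ⟨i, -, hi⟩ := Finset.exists_ne_zero_of_sum_ne_zero hk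
    have hP1 : P i (k + v) u ≠ 0 := fun h => hi (by simp [h])
    have hP2 : P i k 0 ≠ 0 := fun h => hi (by simp [h])
    have c1 := hadapt i (k + v) u hP1
    have c2 := hadapt i k 0 hP2
    have hentry : (A + Aᵀ + Aᵀ * A) v u = A v u + A u v + ∑ x, A x v * A x u := by
      simp [Matrix.add_apply, Matrix.mul_apply, Matrix.transpose_apply]
    have hsum_nn : (0:ℝ) ≤ ∑ x, A x v * A x u :=
      Finset.sum_nonneg fun x _ => mul_nonneg (hAnn _ _) (hAnn _ _)
    rw [hentry]
    rcases c1 with h1 | h1 <;> rcases c2 with h2 | h2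
    · exfalso; apply huv
      subst h2; rw [zero_add] at h1; exact h1.symm
    · -- k + v = u, A k 0 ≠ 0
      have hv : A u v ≠ 0 := by
        have hs := hshift k 0 v
        rw [zero_add, h1] at hs
        rw [hs]; exact h2
      have : A u v = 1 := (hA01 u v).resolve_left hv
      have := hAnn v u
      intro hc; linarith
    · -- A (k+v) u ≠ 0, k = 0
      subst h2; rw [zero_add] at h1
      have : A v u = 1 := (hA01 v u).resolve_left h1
      have := hAnn u v
      intro hc; linarith
    · have hs := hshift k 0 v
      rw [zero_add] at hs
      have hAv : A (k + v) v = 1 := by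
        rw [hs]; exact (hA01 k 0).resolve_left h2
      have hAu : A (k + v) u = 1 := (hA01 (k + v) u).resolve_left h1
      have hone : (1:ℝ) ≤ ∑ x, A x v * A x u := by
        have := Finset.single_le_sum
          (f := fun x => A x v * A x u)
          (fun x _ => mul_nonneg (hAnn _ _) (hAnn _ _)) (Finset.mem_univ (k + v))
        replace this : A (k + v) v * A (k + v) u ≤ ∑ x, A x v * A x u := this
        rw [hAv, hAu] at this; simpa using this
      have := hAnn v u; have := hAnn u v
      intro hc; linarith
end
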